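/- arXiv:1902.00822 — 3 statements merged into one kernel-verified Lean document; each statement's English description precedes it below -/
import Mathlib

section
/- Let P be the transition matrix of a discrete-time Markov chain (X(i))_{i∈ℤ₊} on a discrete state space S, and let S̃ ⊆ S. For x ∈ S set N(x) := {y ∈ S : P(x,y) > 0}, and for f: S → ℝ let (P^k f)(x) := E_x[f(X(k))]. Suppose f is such that (P^i f)(x) exists for all x ∈ S and i ∈ ℤ₊, and that there are positive constants β and (α_i)_{i∈ℤ₊} such that, for all i ∈ ℤ₊: (1) |(P^i f)(x) − (P^i f)(y)| ≤ β for all x ∈ S̃ and y ∈ N(x); and (2) Σ_{y∈N(x)} P(x,y) ((P^i f)(x) − (P^i f)(y))² ≤ α_i for all x ∈ S̃. Set a_k := Σ_{i=0}^{k−1} α_i and let A_k be the event {X(i) ∈ S̃ for 0 ≤ i ≤ k−1}. Then for every x₀ ∈ S̃, every k ≥ 1 and every m ≥ 0: P_{x₀}({|f(X(k)) − (P^k f)(x₀)| ≥ m} ∩ A_k) ≤ 2·exp(−m² / (2a_k + 4βm/3)). -/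
open MeasureTheory

/-- A family of path-space measures `μ x` is the law of the discrete-time Markov chain with
transition matrix `P` started at `x`: each `μ x` is a probability measure, started at `x`,
and finite-dimensional cylinder probabilities satisfy the Markov recursion. -/
def IsMarkovChain {S : Type*} [MeasurableSpace S] (P : S → S → ℝ)
    (μ : S → Measure (ℕ → S)) : Prop :=
  (∀ x, IsProbabilityMeasure (μ x)) ∧
  (∀ x, μ x {ω | ω 0 = x} = 1) ∧
  (∀ (x : S) (n : ℕ) (path : ℕ → S),
    μ x {ω | ∀ i ≤ n + 1, ω i = path i}
      = μ x {ω | ∀ i ≤ n, ω i = path i} * ENNReal.ofReal (P (path n) (path (n + 1))))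

/-- `(P^k f)(x) = E_x [f(X(k))]`. -/
noncomputable def Pf {S : Type*} [MeasurableSpace S] (μ : S → Measure (ℕ → S))
    (f : S → ℝ) (k : ℕ) (x : S) : ℝ :=
  ∫ ω, f (ω k) ∂ μ x

namespace FreedmanAux

open scoped Classical

set_option linter.unusedSectionVars false

variable {S : Type*} [MeasurableSpace S] [MeasurableSingletonClass S] [Countable S]

/-- projection onto the first `n+1` coordinates -/
def proj (n : ℕ) : (ℕ → S) → (Fin (n + 1) → S) := fun ω i => ω i

lemma measurable_proj (n : ℕ) : Measurable (proj (S := S) n) :=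
  measurable_pi_lambda _ fun _ => measurable_pi_apply _

instance instMSC (n : ℕ) : MeasurableSingletonClass (Fin (n + 1) → S) := by
  refine ⟨fun q => ?_⟩
  have : {q} = ⋂ i : Fin (n + 1), (fun p : Fin (n + 1) → S => p i) ⁻¹' {q i} := by
    ext p; simp [funext_iff]
  rw [this]
  exact MeasurableSet.iInter fun i => (measurable_pi_apply i) (measurableSet_singleton _)

/-- cylinder set -/
def Cy (n : ℕ) (q : Fin (n + 1) → S) : Set (ℕ → S) := proj n ⁻¹' {q}

lemma mem_Cy {n : ℕ} {q : Fin (n + 1) → S} {ω : ℕ → S} :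
    ω ∈ Cy n q ↔ ∀ i : Fin (n + 1), ω (i : ℕ) = q i := by
  simp [Cy, proj, funext_iff]

lemma measurableSet_Cy (n : ℕ) (q : Fin (n + 1) → S) : MeasurableSet (Cy n q) :=
  measurable_proj n (measurableSet_singleton q)

variable {P : S → S → ℝ} {μ : S → Measure (ℕ → S)}

lemma cy_measure (hμ : IsMarkovChain P μ) (x : S) :
    ∀ (n : ℕ) (q : Fin (n + 1) → S),
    μ x (Cy n q) = (if q 0 = x then 1 else 0) *
      ∏ i : Fin n, ENNReal.ofReal (P (q i.castSucc) (q i.succ)) := by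
  intro n
  induction n with
  | zero =>
    intro q
    have hC : Cy 0 q = (fun ω : ℕ → S => ω 0) ⁻¹' {q 0} := by
      ext ω; rw [mem_Cy]; constructor
      · intro h; exact h 0
      · intro h i; fin_cases i; exact h
    haveI := hμ.1 x
    have hstart : {ω : ℕ → S | ω 0 = x} = (fun ω : ℕ → S => ω 0) ⁻¹' {x} := rfl
    rw [hC]
    by_cases h : q 0 = x
    · subst h
      have := hμ.2.1 (q 0)
      rw [hstart] at this
      simp [this]
    · have h1 : (fun ω : ℕ → S => ω 0) ⁻¹' {q 0} ⊆ ((fun ω : ℕ → S => ω 0) ⁻¹' {x})ᶜ := by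
        intro ω hω hx
        have hω' : ω 0 = q 0 := hω
        have hx' : ω 0 = x := hx
        exact h (hω'.symm.trans hx')
      have hone : μ x ((fun ω : ℕ → S => ω 0) ⁻¹' {x}) = 1 := hμ.2.1 x
      have h2 : μ x ((fun ω : ℕ → S => ω 0) ⁻¹' {x})ᶜ = 0 := by
        rw [measure_compl ((measurable_pi_apply 0) (measurableSet_singleton x))
          (measure_ne_top _ _), hone, measure_univ]
        simp
      have : μ x ((fun ω : ℕ → S => ω 0) ⁻¹' {q 0}) = 0 :=
        le_antisymm ((measure_mono h1).trans h2.le) zero_le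
      simp [h, this]
  | succ n ih =>
    intro q
    set p : ℕ → S := fun i => q ⟨min i (n + 1), by omega⟩ with hp
    have hp2 : ∀ (i : ℕ) (hi : i ≤ n + 1), p i = q ⟨i, by omega⟩ := by
      intro i hi
      exact congrArg q (Fin.ext (by simp [Nat.min_eq_left hi]))
    have hpq : ∀ i : Fin (n + 2), p (i : ℕ) = q i := fun i => by
      rw [hp2 (i : ℕ) (Nat.lt_succ_iff.mp i.2)]
    have e1 : Cy (n + 1) q = {ω | ∀ i ≤ n + 1, ω i = p i} := by
      ext ω; rw [mem_Cy]; constructor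
      · intro h i hi
        rw [hp2 i hi]
        exact h ⟨i, by omega⟩
      · intro h i
        rw [← hpq i]
        exact h (i : ℕ) (Nat.lt_succ_iff.mp i.2)
    have e2 : {ω : ℕ → S | ∀ i ≤ n, ω i = p i} = Cy n (fun i : Fin (n + 1) => q i.castSucc) := by
      ext ω; rw [mem_Cy]; constructor
      · intro h i
        have h1 := h (i : ℕ) (Nat.le_of_lt_succ i.2)
        rw [h1, hp2 (i : ℕ) (by omega)]
        exact congrArg q (Fin.ext rfl)
      · intro h i hi
        have h1 := h (⟨i, by omega⟩ : Fin (n + 1))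
        rw [hp2 i (by omega)]
        exact h1
    have hrec := hμ.2.2 x n p
    have hn : p n = q (Fin.last n).castSucc := hpq ((Fin.last n).castSucc)
    have hn1 : p (n + 1) = q (Fin.last (n + 1)) := hpq (Fin.last (n + 1))
    rw [e1, hrec, e2, ih, hn, hn1, Fin.prod_univ_castSucc]
    simp only [Fin.succ_castSucc, Fin.succ_last, Fin.castSucc_zero]
    exact mul_assoc _ _ _

lemma measure_proj_preimage (x : S) (n : ℕ) (B : Set (Fin (n + 1) → S)) :
    μ x (proj n ⁻¹' B) = ∑' q : Fin (n + 1) → S, B.indicator (fun q => μ x (Cy n q)) q := by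
  have hU : proj n ⁻¹' B = ⋃ q ∈ B, Cy n q := by
    ext ω; simp [Cy, Set.mem_iUnion]
  rw [hU, measure_biUnion B.to_countable ?hd fun q _ => measurableSet_Cy n q, ← tsum_subtype]
  case hd =>
    intro q _ q' _ hne
    exact ((Set.disjoint_singleton.mpr hne).preimage (proj n)).mono le_rfl le_rfl

lemma map_proj_singleton (hμ : IsMarkovChain P μ) (x : S) (n : ℕ) (q : Fin (n + 1) → S) :
    (μ x).map (proj n) {q} = μ x (Cy n q) := by
  rw [Measure.map_apply (measurable_proj n) (measurableSet_singleton q)]; rfl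

lemma integrable_proj (x : S) (n : ℕ) {h : (Fin (n + 1) → S) → ℝ}
    (hi : Integrable (fun ω => h (proj n ω)) (μ x)) :
    Integrable h ((μ x).map (proj n)) := by
  refine (integrable_map_measure ?_ (measurable_proj n).aemeasurable).mpr hi
  exact (measurable_of_countable h).aestronglyMeasurable

lemma integral_proj (hμ : IsMarkovChain P μ) (x : S) (n : ℕ) (h : (Fin (n + 1) → S) → ℝ)
    (hi : Integrable (fun ω => h (proj n ω)) (μ x)) :
    ∫ ω, h (proj n ω) ∂ μ x = ∑' q, (μ x (Cy n q)).toReal * h q := by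
  have h1 : ∫ ω, h (proj n ω) ∂ μ x = ∫ q, h q ∂ ((μ x).map (proj n)) :=
    (integral_map (measurable_proj n).aemeasurable
      (measurable_of_countable h).aestronglyMeasurable).symm
  rw [h1, integral_countable' (integrable_proj x n hi)]
  exact tsum_congr fun q => by rw [measureReal_def, map_proj_singleton hμ x n q, smul_eq_mul]

lemma summable_proj (hμ : IsMarkovChain P μ) (x : S) (n : ℕ) {h : (Fin (n + 1) → S) → ℝ}
    (hi : Integrable (fun ω => h (proj n ω)) (μ x)) :
    Summable fun q => (μ x (Cy n q)).toReal * h q := by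
  have hi' := integrable_proj (μ := μ) x n hi
  have hfin : ∫⁻ q, (‖h q‖₊ : ENNReal) ∂ ((μ x).map (proj n)) ≠ ⊤ := hi'.2.ne
  rw [lintegral_countable'] at hfin
  have hsum := ENNReal.summable_toReal hfin
  refine Summable.of_norm ?_
  refine hsum.congr fun q => ?_
  rw [ENNReal.toReal_mul, map_proj_singleton hμ x n q]
  simp [norm_mul, abs_mul, ENNReal.toReal_nonneg, abs_of_nonneg, mul_comm]

lemma Pf_eq_sum (hμ : IsMarkovChain P μ) (f : S → ℝ)
    (hint : ∀ x k, Integrable (fun ω => f (ω k)) (μ x)) (x : S) (n : ℕ) :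
    Pf μ f n x = ∑' q : Fin (n + 1) → S, (μ x (Cy n q)).toReal * f (q (Fin.last n)) := by
  exact integral_proj hμ x n (fun q : Fin (n + 1) → S => f (q (Fin.last n))) (hint x n)

lemma Pf_zero (hμ : IsMarkovChain P μ) (f : S → ℝ) (x : S) : Pf μ f 0 x = f x := by
  haveI := hμ.1 x
  have hae : ∀ᵐ ω ∂ μ x, ω 0 = x := by
    rw [ae_iff]
    have : {ω : ℕ → S | ¬ ω 0 = x} = ((fun ω : ℕ → S => ω 0) ⁻¹' {x})ᶜ := rfl
    rw [this, measure_compl ((measurable_pi_apply 0) (measurableSet_singleton x))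
      (measure_ne_top _ _)]
    have hone : μ x ((fun ω : ℕ → S => ω 0) ⁻¹' {x}) = 1 := hμ.2.1 x
    rw [hone, measure_univ]; simp
  have : Pf μ f 0 x = ∫ _ω, f x ∂ μ x := integral_congr_ae (hae.mono fun ω hω => by show f (ω 0) = f x; exact congrArg f hω)
  rw [this, integral_const]; simp

lemma cons_measure (hμ : IsMarkovChain P μ) (x : S) (n : ℕ) (a : S) (r : Fin (n + 1) → S) :
    μ x (Cy (n + 1) (Fin.cons a r)) =
      (if a = x then 1 else 0) * ENNReal.ofReal (P a (r 0)) * μ (r 0) (Cy n r) := by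
  rw [cy_measure hμ x (n + 1) (Fin.cons a r), cy_measure hμ (r 0) n r, Fin.prod_univ_succ]
  have hterm : ∀ i : Fin n,
      ENNReal.ofReal (P ((Fin.cons a r : Fin (n + 2) → S) i.succ.castSucc)
        ((Fin.cons a r : Fin (n + 2) → S) i.succ.succ))
      = ENNReal.ofReal (P (r i.castSucc) (r i.succ)) := by
    intro i
    rw [← Fin.succ_castSucc]
    simp
  rw [Finset.prod_congr rfl fun i _ => hterm i]
  simp only [Fin.cons_zero, Fin.cons_succ, Fin.castSucc_zero, if_pos rfl, one_mul,
    Fin.succ_zero_eq_one]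
  have : (Fin.cons a r : Fin (n + 2) → S) 1 = r 0 := by
    have : (1 : Fin (n + 2)) = (0 : Fin (n + 1)).succ := by simp
    rw [this, Fin.cons_succ]
  rw [this]
  simp

lemma cons_mem_St_iff (St : Set S) (n : ℕ) (x : S) (r : Fin (n + 1) → S) :
    (∀ i : Fin (n + 2), (i : ℕ) < n + 1 → (Fin.cons x r : Fin (n + 2) → S) i ∈ St)
      ↔ (x ∈ St ∧ ∀ i : Fin (n + 1), (i : ℕ) < n → r i ∈ St) := by
  constructor
  · intro h
    refine ⟨h 0 (Nat.succ_pos n), fun i hi => ?_⟩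
    have := h i.succ (by simpa using Nat.succ_lt_succ hi)
    rwa [Fin.cons_succ] at this
  · intro ⟨hx, hr⟩ i hi
    induction i using Fin.cases with
    | zero => exact hx
    | succ j =>
      rw [Fin.cons_succ]
      exact hr j (by simpa using Nat.lt_of_succ_lt_succ (by simpa using hi))

lemma Pf_succ (hμ : IsMarkovChain P μ) (hP0 : ∀ x y, 0 ≤ P x y) (f : S → ℝ)
    (hint : ∀ x k, Integrable (fun ω => f (ω k)) (μ x)) (x : S) (n : ℕ) :
    HasSum (fun y => P x y * Pf μ f n y) (Pf μ f (n + 1) x) := by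
  classical
  set A : (Fin (n + 2) → S) → ℝ :=
    fun q => (μ x (Cy (n + 1) q)).toReal * f (q (Fin.last (n + 1))) with hA
  have hAsum : Summable A :=
    summable_proj hμ x (n + 1) (h := fun q => f (q (Fin.last (n + 1)))) (hint x (n + 1))
  have hPfA : Pf μ f (n + 1) x = ∑' q, A q := Pf_eq_sum hμ f hint x (n + 1)
  set e : (S × (Fin (n + 1) → S)) ≃ (Fin (n + 2) → S) := Fin.consEquiv (fun _ => S) with he
  have heapp : ∀ p : S × (Fin (n + 1) → S), e p = Fin.cons p.1 p.2 := fun p => rfl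
  set B : S × (Fin (n + 1) → S) → ℝ :=
    fun p => (if p.1 = x then 1 else 0) *
      (P p.1 (p.2 0) * ((μ (p.2 0) (Cy n p.2)).toReal * f (p.2 (Fin.last n)))) with hB
  have hBA : ∀ p : S × (Fin (n + 1) → S), B p = A (e p) := by
    rintro ⟨a, r⟩
    show (if a = x then 1 else 0) * (P a (r 0) * ((μ (r 0) (Cy n r)).toReal * f (r (Fin.last n))))
      = (μ x (Cy (n + 1) (Fin.cons a r))).toReal
          * f ((Fin.cons a r : Fin (n + 2) → S) (Fin.last (n + 1)))
    rw [cons_measure hμ x n a r]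
    have hlast : (Fin.cons a r : Fin (n + 2) → S) (Fin.last (n + 1)) = r (Fin.last n) := by
      rw [← Fin.succ_last, Fin.cons_succ]
    rw [hlast, ENNReal.toReal_mul, ENNReal.toReal_mul, ENNReal.toReal_ofReal (hP0 a (r 0))]
    by_cases h : a = x <;> simp [h] <;> ring
  have hBsum : Summable B := by
    rw [show B = A ∘ e from funext hBA]
    exact hAsum.comp_injective e.injective
  have hBtsum : ∑' p, B p = Pf μ f (n + 1) x := by
    rw [hPfA, show B = A ∘ e from funext hBA]
    exact e.tsum_eq A
  -- collapse the first coordinate to x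
  have hcol : ∑' p, B p = ∑' r : Fin (n + 1) → S,
      P x (r 0) * ((μ (r 0) (Cy n r)).toReal * f (r (Fin.last n))) := by
    rw [Summable.tsum_prod' hBsum (fun a => (hBsum.prod_factor a))]
    rw [tsum_eq_single x ?h0]
    · exact tsum_congr fun r => by simp [hB]
    case h0 =>
      intro a ha
      simp only [hB, if_neg ha, zero_mul]
      exact tsum_zero
  have hBxsum : Summable fun r : Fin (n + 1) → S =>
      P x (r 0) * ((μ (r 0) (Cy n r)).toReal * f (r (Fin.last n))) := by
    have := hBsum.prod_factor x
    refine this.congr fun r => ?_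
    simp [hB]
  -- regroup by the value of r 0
  set H : S × (Fin (n + 1) → S) → ℝ :=
    fun p => P x p.1 * ((μ p.1 (Cy n p.2)).toReal * f (p.2 (Fin.last n))) with hH
  set ι : (Fin (n + 1) → S) → S × (Fin (n + 1) → S) := fun r => (r 0, r) with hι
  have hιinj : Function.Injective ι := fun r r' h => congrArg Prod.snd h
  have hHvanish : ∀ p ∉ Set.range ι, H p = 0 := by
    rintro ⟨y, r⟩ hp
    have hyr : ¬ r 0 = y := fun h => hp ⟨r, by rw [hι]; exact Prod.ext (by simp [h]) rfl⟩
    have : μ y (Cy n r) = 0 := by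
      rw [cy_measure hμ y n r, if_neg hyr, zero_mul]
    simp [hH, this]
  have hHcomp : ∀ r, H (ι r) = P x (r 0) * ((μ (r 0) (Cy n r)).toReal * f (r (Fin.last n))) :=
    fun r => rfl
  have hHsum : Summable H := by
    refine (Function.Injective.summable_iff hιinj ?_).mp ?_
    · exact fun p hp => hHvanish p hp
    · exact hBxsum.congr fun r => (hHcomp r).symm
  have hHtsum : ∑' p, H p = Pf μ f (n + 1) x := by
    rw [← hBtsum, hcol,
      ← Function.Injective.tsum_eq hιinj (fun p hp => by
        by_contra hc
        exact hp (hHvanish p hc))]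
  -- fiberwise
  have hfib : ∀ y, HasSum (fun r : Fin (n + 1) → S => H (y, r))
      (P x y * Pf μ f n y) := by
    intro y
    have h1 : Summable fun r : Fin (n + 1) → S => H (y, r) := hHsum.prod_factor y
    have h2 : ∑' r, H (y, r) = P x y * Pf μ f n y := by
      rw [hH]
      simp only
      rw [tsum_mul_left, ← Pf_eq_sum hμ f hint y n]
    exact h2 ▸ h1.hasSum
  exact hHtsum ▸ (hHsum.hasSum.prod_fiberwise hfib)

lemma factorial_ge_aux : ∀ n : ℕ, 2 * 3 ^ n ≤ (n + 2).factorial := by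
  intro n
  induction n with
  | zero => simp [Nat.factorial]
  | succ n ih =>
    have : (n + 3).factorial = (n + 3) * (n + 2).factorial := rfl
    calc 2 * 3 ^ (n + 1) = 3 * (2 * 3 ^ n) := by ring
    _ ≤ 3 * (n + 2).factorial := by omega
    _ ≤ (n + 3) * (n + 2).factorial := Nat.mul_le_mul_right _ (by omega)
    _ = (n + 3).factorial := this.symm

set_option maxHeartbeats 2000000 in
lemma exp_le_quad {u v : ℝ} (h : |u| ≤ v) (hv : v < 3) :
    Real.exp u ≤ 1 + u + u ^ 2 / (2 * (1 - v / 3)) := by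
  have hv0 : 0 ≤ v := (abs_nonneg u).trans h
  have hlt : v / 3 < 1 := by linarith
  have hpos : 0 < 1 - v / 3 := by linarith
  have hexp : Real.exp u = ∑' n : ℕ, u ^ n / n.factorial := by
    have h := NormedSpace.exp_eq_tsum_div (𝔸 := ℝ)
    rw [Real.exp_eq_exp_ℝ, h]
  have hsum : Summable (fun n : ℕ => u ^ n / n.factorial) := Real.summable_pow_div_factorial u
  have hsum1 : Summable (fun n : ℕ => u ^ (n + 1) / (n + 1).factorial) :=
    (summable_nat_add_iff 1).mpr hsum
  have hsum2 : Summable (fun n : ℕ => u ^ (n + 2) / (n + 2).factorial) :=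
    (summable_nat_add_iff 2).mpr hsum
  have split : ∑' n : ℕ, u ^ n / (n.factorial : ℝ)
      = 1 + u + ∑' n : ℕ, u ^ (n + 2) / ((n + 2).factorial : ℝ) := by
    rw [Summable.tsum_eq_zero_add hsum, Summable.tsum_eq_zero_add hsum1,
      tsum_congr (fun b : ℕ => show u ^ (b + 1 + 1) / (((b + 1 + 1).factorial : ℕ) : ℝ)
        = u ^ (b + 2) / (((b + 2).factorial : ℕ) : ℝ) from by norm_num)]
    norm_num
    ring
  rw [hexp, split]
  have key : ∑' n : ℕ, u ^ (n + 2) / (n + 2).factorial ≤ u ^ 2 / (2 * (1 - v / 3)) := by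
    have hg : Summable (fun n : ℕ => u ^ 2 / 2 * (v / 3) ^ n) :=
      (summable_geometric_of_lt_one (by positivity) hlt).mul_left _
    have hle : ∀ n : ℕ, u ^ (n + 2) / (n + 2).factorial ≤ u ^ 2 / 2 * (v / 3) ^ n := by
      intro n
      have h1 : u ^ (n + 2) ≤ u ^ 2 * v ^ n := by
        calc u ^ (n + 2) ≤ |u ^ (n + 2)| := le_abs_self _
        _ = |u| ^ 2 * |u| ^ n := by rw [abs_pow]; ring
        _ = u ^ 2 * |u| ^ n := by rw [sq_abs]
        _ ≤ u ^ 2 * v ^ n := by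
            exact mul_le_mul_of_nonneg_left (pow_le_pow_left₀ (abs_nonneg u) h n) (sq_nonneg u)
      have h2 : (2 * 3 ^ n : ℝ) ≤ ((n + 2).factorial : ℝ) := by
        exact_mod_cast Nat.cast_le.mpr (factorial_ge_aux n)
      calc u ^ (n + 2) / ((n + 2).factorial : ℝ)
          ≤ (u ^ 2 * v ^ n) / (2 * 3 ^ n) := by
            apply div_le_div₀ (by positivity) h1 (by positivity) h2
      _ = u ^ 2 / 2 * (v / 3) ^ n := by rw [div_pow]; ring
    calc ∑' n : ℕ, u ^ (n + 2) / (n + 2).factorial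
        ≤ ∑' n : ℕ, u ^ 2 / 2 * (v / 3) ^ n := Summable.tsum_le_tsum hle hsum2 hg
    _ = u ^ 2 / 2 * (1 - v / 3)⁻¹ := by
        rw [tsum_mul_left, tsum_geometric_of_lt_one (by positivity) hlt]
    _ = u ^ 2 / (2 * (1 - v / 3)) := by field_simp
  linarith



lemma step_bound (hμ : IsMarkovChain P μ) (hP0 : ∀ x y, 0 ≤ P x y)
    (hProw : ∀ x, HasSum (P x) 1)
    (St : Set S) (f : S → ℝ) (hint : ∀ x k, Integrable (fun ω => f (ω k)) (μ x))
    (β : ℝ) (hβ : 0 < β) (α : ℕ → ℝ)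
    (h1 : ∀ (i : ℕ), ∀ x ∈ St, ∀ y, 0 < P x y → |Pf μ f i x - Pf μ f i y| ≤ β)
    (h2 : ∀ (i : ℕ), ∀ x ∈ St, ∑' y, P x y * (Pf μ f i x - Pf μ f i y) ^ 2 ≤ α i)
    {x : S} (hx : x ∈ St) {lam : ℝ} (hlam : 0 ≤ lam) (hlam3 : 2 * β * lam < 3) (n : ℕ) :
    Summable (fun y => P x y * Real.exp (lam * (Pf μ f n y - Pf μ f (n + 1) x))) ∧
    ∑' y, P x y * Real.exp (lam * (Pf μ f n y - Pf μ f (n + 1) x))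
      ≤ Real.exp (α n * (lam ^ 2 / (2 * (1 - 2 * β * lam / 3)))) := by
  have hmart := Pf_succ hμ hP0 f hint x n
  have hPsum : Summable (P x) := (hProw x).summable
  have hPts : ∑' y, P x y = 1 := (hProw x).tsum_eq
  set g : ℕ → S → ℝ := Pf μ f with hg
  set D : S → ℝ := fun y => g n y - g (n + 1) x with hD
  set Δ : S → ℝ := fun y => g n y - g n x with hΔ
  set c : ℝ := g (n + 1) x - g n x with hcdef
  have hPgsum : Summable (fun y => P x y * g n y) := hmart.summable
  have hPgts : ∑' y, P x y * g n y = g (n + 1) x := hmart.tsum_eq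
  have hPΔ : Summable (fun y => P x y * Δ y) := by
    have he : (fun y => P x y * Δ y) = fun y => P x y * g n y - P x y * g n x :=
      funext fun y => by simp only [hΔ]; ring
    rw [he]; exact hPgsum.sub (hPsum.mul_right _)
  have hPΔts : ∑' y, P x y * Δ y = c := by
    have he : (fun y => P x y * Δ y) = fun y => P x y * g n y - P x y * g n x :=
      funext fun y => by simp only [hΔ]; ring
    rw [he, Summable.tsum_sub hPgsum (hPsum.mul_right _), hPgts, tsum_mul_right, hPts, one_mul, hcdef]
  have hΔb : ∀ y, 0 < P x y → |Δ y| ≤ β := by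
    intro y hy
    have := h1 n x hx y hy
    rwa [abs_sub_comm] at this
  have hPΔ2 : Summable (fun y => P x y * Δ y ^ 2) := by
    refine Summable.of_nonneg_of_le (fun y => mul_nonneg (hP0 x y) (sq_nonneg _))
      (fun y => ?_) (hPsum.mul_right (β ^ 2))
    by_cases hy : 0 < P x y
    · refine mul_le_mul_of_nonneg_left ?_ (hP0 x y)
      calc Δ y ^ 2 = |Δ y| ^ 2 := (sq_abs _).symm
      _ ≤ β ^ 2 := pow_le_pow_left₀ (abs_nonneg _) (hΔb y hy) 2
    · have h0 : P x y = 0 := le_antisymm (not_lt.mp hy) (hP0 x y)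
      simp [h0]
  have hPΔ2le : ∑' y, P x y * Δ y ^ 2 ≤ α n := by
    refine le_trans (le_of_eq (tsum_congr fun y => ?_)) (h2 n x hx)
    simp only [hΔ, hg]
    ring
  have hcb : |c| ≤ β := by
    have habs : Summable fun y => |P x y * Δ y| := by
      refine Summable.of_nonneg_of_le (fun y => abs_nonneg _) (fun y => ?_)
        (hPsum.mul_right β)
      by_cases hy : 0 < P x y
      · rw [abs_mul, abs_of_nonneg (hP0 x y)]
        exact mul_le_mul_of_nonneg_left (hΔb y hy) (hP0 x y)
      · have h0 : P x y = 0 := le_antisymm (not_lt.mp hy) (hP0 x y)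
        simp [h0]
    calc |c| = |∑' y, P x y * Δ y| := by rw [hPΔts]
    _ ≤ ∑' y, |P x y * Δ y| := by
        have := norm_tsum_le_tsum_norm (f := fun y => P x y * Δ y)
          (by simpa only [Real.norm_eq_abs] using habs)
        simpa only [Real.norm_eq_abs] using this
    _ ≤ ∑' y, P x y * β := by
        refine Summable.tsum_le_tsum (fun y => ?_) habs (hPsum.mul_right β)
        by_cases hy : 0 < P x y
        · rw [abs_mul, abs_of_nonneg (hP0 x y)]
          exact mul_le_mul_of_nonneg_left (hΔb y hy) (hP0 x y)
        · have h0 : P x y = 0 := le_antisymm (not_lt.mp hy) (hP0 x y)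
          simp [h0]
    _ = β := by rw [tsum_mul_right, hPts, one_mul]
  have hDb : ∀ y, 0 < P x y → |D y| ≤ 2 * β := by
    intro y hy
    have he : D y = Δ y - c := by simp only [hD, hΔ, hcdef]; ring
    calc |D y| = |Δ y - c| := by rw [he]
    _ ≤ |Δ y| + |c| := abs_sub _ _
    _ ≤ β + β := add_le_add (hΔb y hy) hcb
    _ = 2 * β := by ring
  set v : ℝ := 2 * β * lam with hv
  have hv0 : 0 ≤ v := by positivity
  have hvlt : v < 3 := hlam3
  have hpos : 0 < 1 - v / 3 := by
    rw [hv]; rw [hv] at hvlt; linarith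
  set K : ℝ := lam ^ 2 / (2 * (1 - v / 3)) with hK
  have hK0 : 0 ≤ K := div_nonneg (sq_nonneg _) (by linarith)
  -- decomposition of second moment
  have heD2 : (fun y => P x y * D y ^ 2)
      = fun y => (P x y * Δ y ^ 2 - (2 * c) * (P x y * Δ y)) + c ^ 2 * P x y :=
    funext fun y => by simp only [hD, hΔ, hcdef]; ring
  have hPD2 : Summable (fun y => P x y * D y ^ 2) := by
    rw [heD2]; exact ((hPΔ2.sub (hPΔ.mul_left _)).add (hPsum.mul_left _))
  have hPD2le : ∑' y, P x y * D y ^ 2 ≤ α n := by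
    rw [heD2, Summable.tsum_add (hPΔ2.sub (hPΔ.mul_left _)) (hPsum.mul_left _),
      Summable.tsum_sub hPΔ2 (hPΔ.mul_left _), tsum_mul_left, tsum_mul_left, hPΔts, hPts, mul_one]
    nlinarith [hPΔ2le, sq_nonneg c]
  -- mean zero of D
  have hePD : (fun y => P x y * D y) = fun y => P x y * g n y - P x y * g (n + 1) x :=
    funext fun y => by simp only [hD]; ring
  have hPD : Summable (fun y => P x y * D y) := by
    rw [hePD]; exact hPgsum.sub (hPsum.mul_right _)
  have hPDts : ∑' y, P x y * D y = 0 := by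
    rw [hePD, Summable.tsum_sub hPgsum (hPsum.mul_right _), hPgts, tsum_mul_right, hPts, one_mul,
      sub_self]
  -- pointwise bound
  have hpt : ∀ y, P x y * Real.exp (lam * D y)
      ≤ P x y * (1 + lam * D y + (lam * D y) ^ 2 / (2 * (1 - v / 3))) := by
    intro y
    by_cases hy : 0 < P x y
    · refine mul_le_mul_of_nonneg_left ?_ (hP0 x y)
      refine exp_le_quad ?_ hvlt
      rw [abs_mul, abs_of_nonneg hlam]
      calc lam * |D y| ≤ lam * (2 * β) := mul_le_mul_of_nonneg_left (hDb y hy) hlam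
      _ = v := by rw [hv]; ring
    · have h0 : P x y = 0 := le_antisymm (not_lt.mp hy) (hP0 x y)
      simp [h0]
  have heR : (fun y => P x y * (1 + lam * D y + (lam * D y) ^ 2 / (2 * (1 - v / 3))))
      = fun y => (P x y + lam * (P x y * D y)) + K * (P x y * D y ^ 2) := by
    funext y
    rw [hK]
    field_simp
  have hsumR : Summable (fun y => P x y * (1 + lam * D y + (lam * D y) ^ 2 / (2 * (1 - v / 3)))) := by
    rw [heR]; exact ((hPsum.add (hPD.mul_left _)).add (hPD2.mul_left _))
  have hsumL : Summable (fun y => P x y * Real.exp (lam * D y)) := by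
    refine Summable.of_nonneg_of_le (fun y => mul_nonneg (hP0 x y) (Real.exp_pos _).le)
      (fun y => ?_) (hPsum.mul_right (Real.exp v))
    by_cases hy : 0 < P x y
    · refine mul_le_mul_of_nonneg_left (Real.exp_le_exp.mpr ?_) (hP0 x y)
      calc lam * D y ≤ |lam * D y| := le_abs_self _
      _ ≤ v := by
          rw [abs_mul, abs_of_nonneg hlam]
          calc lam * |D y| ≤ lam * (2 * β) := mul_le_mul_of_nonneg_left (hDb y hy) hlam
          _ = v := by rw [hv]; ring
    · have h0 : P x y = 0 := le_antisymm (not_lt.mp hy) (hP0 x y)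
      simp [h0]
  refine ⟨hsumL, ?_⟩
  calc ∑' y, P x y * Real.exp (lam * D y)
      ≤ ∑' y, P x y * (1 + lam * D y + (lam * D y) ^ 2 / (2 * (1 - v / 3))) :=
        Summable.tsum_le_tsum hpt hsumL hsumR
  _ = 1 + lam * 0 + K * ∑' y, P x y * D y ^ 2 := by
      rw [heR, Summable.tsum_add (hPsum.add (hPD.mul_left _)) (hPD2.mul_left _),
        Summable.tsum_add hPsum (hPD.mul_left _), tsum_mul_left, tsum_mul_left, hPts, hPDts]
  _ ≤ 1 + α n * K := by
      rw [mul_zero, add_zero]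
      have := mul_le_mul_of_nonneg_left hPD2le hK0
      linarith
  _ ≤ Real.exp (α n * K) := by
      have := Real.add_one_le_exp (α n * K)
      linarith

lemma phi_bound (hμ : IsMarkovChain P μ) (hP0 : ∀ x y, 0 ≤ P x y)
    (hProw : ∀ x, HasSum (P x) 1)
    (St : Set S) (f : S → ℝ) (hint : ∀ x k, Integrable (fun ω => f (ω k)) (μ x))
    (β : ℝ) (hβ : 0 < β) (α : ℕ → ℝ)
    (h1 : ∀ (i : ℕ), ∀ x ∈ St, ∀ y, 0 < P x y → |Pf μ f i x - Pf μ f i y| ≤ β)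
    (h2 : ∀ (i : ℕ), ∀ x ∈ St, ∑' y, P x y * (Pf μ f i x - Pf μ f i y) ^ 2 ≤ α i)
    {lam : ℝ} (hlam : 0 ≤ lam) (hlam3 : 2 * β * lam < 3) :
    ∀ (n : ℕ) (x : S), (x ∈ St ∨ n = 0) →
    ∑' q : Fin (n + 1) → S, μ x (Cy n q) * ENNReal.ofReal
        (if ∀ i : Fin (n + 1), (i : ℕ) < n → q i ∈ St then
          Real.exp (lam * (f (q (Fin.last n)) - Pf μ f n x)) else 0)
      ≤ ENNReal.ofReal
          (Real.exp ((lam ^ 2 / (2 * (1 - 2 * β * lam / 3))) * ∑ j ∈ Finset.range n, α j)) := by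
  set K : ℝ := lam ^ 2 / (2 * (1 - 2 * β * lam / 3)) with hK
  intro n
  induction n with
  | zero =>
    intro x _
    rw [tsum_eq_single (fun _ : Fin 1 => x) ?h0]
    case h0 =>
      intro q hq
      have hq0 : ¬ q 0 = x := fun h => hq (funext fun i => by
        rw [Subsingleton.elim i (0 : Fin 1)]; exact h)
      rw [cy_measure hμ x 0 q, if_neg hq0, zero_mul, zero_mul]
    have hcy : μ x (Cy 0 (fun _ : Fin 1 => x)) = 1 := by
      rw [cy_measure hμ x 0 (fun _ : Fin 1 => x), if_pos rfl]
      simp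
    have hcond : (∀ i : Fin 1, (i : ℕ) < 0 → (fun _ : Fin 1 => x) i ∈ St) := by
      intro i hi; omega
    rw [hcy, if_pos hcond, Pf_zero hμ f x]
    simp
  | succ n ih =>
    intro x hx'
    have hx : x ∈ St := hx'.resolve_right (Nat.succ_ne_zero n)
    set g : ℕ → S → ℝ := Pf μ f with hg
    set C : ENNReal := ENNReal.ofReal (Real.exp (K * ∑ j ∈ Finset.range n, α j)) with hC
    set T : (Fin (n + 2) → S) → ENNReal := fun q =>
      μ x (Cy (n + 1) q) * ENNReal.ofReal
        (if ∀ i : Fin (n + 2), (i : ℕ) < n + 1 → q i ∈ St then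
          Real.exp (lam * (f (q (Fin.last (n + 1))) - g (n + 1) x)) else 0) with hT
    set e : (S × (Fin (n + 1) → S)) ≃ (Fin (n + 2) → S) := Fin.consEquiv (fun _ => S) with he
    have heapp : ∀ p : S × (Fin (n + 1) → S), e p = Fin.cons p.1 p.2 := fun p => rfl
    set W : S → (Fin (n + 1) → S) → ENNReal := fun y r =>
      ENNReal.ofReal (P x y) * ENNReal.ofReal (Real.exp (lam * (g n y - g (n + 1) x))) *
        (μ y (Cy n r) * ENNReal.ofReal
          (if ∀ i : Fin (n + 1), (i : ℕ) < n → r i ∈ St then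
            Real.exp (lam * (f (r (Fin.last n)) - g n y)) else 0)) with hW
    have hTW : ∀ r : Fin (n + 1) → S, T (Fin.cons x r) = W (r 0) r := by
      intro r
      rw [hT, hW]
      simp only
      rw [cons_measure hμ x n x r, if_pos rfl, one_mul]
      have hlast : (Fin.cons x r : Fin (n + 2) → S) (Fin.last (n + 1)) = r (Fin.last n) := by
        rw [← Fin.succ_last, Fin.cons_succ]
      rw [hlast]
      have hcond : (∀ i : Fin (n + 2), (i : ℕ) < n + 1 → (Fin.cons x r : Fin (n + 2) → S) i ∈ St)
          ↔ (∀ i : Fin (n + 1), (i : ℕ) < n → r i ∈ St) := by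
        rw [cons_mem_St_iff St n x r]
        exact ⟨fun h => h.2, fun h => ⟨hx, h⟩⟩
      have hsplit : ∀ cond : Prop, ∀ inst : Decidable cond,
          (@ite ℝ cond inst (Real.exp (lam * (f (r (Fin.last n)) - g (n + 1) x))) 0)
          = Real.exp (lam * (g n (r 0) - g (n + 1) x)) *
            (@ite ℝ cond inst (Real.exp (lam * (f (r (Fin.last n)) - g n (r 0)))) 0) := by
        intro cond inst
        by_cases hc : cond
        · rw [if_pos hc, if_pos hc, ← Real.exp_add]
          congr 1
          ring
        · rw [if_neg hc, if_neg hc, mul_zero]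
      rw [if_congr hcond rfl rfl, hsplit _ _, ENNReal.ofReal_mul (Real.exp_pos _).le]
      ring
    have hWvanish : ∀ (y : S) (r : Fin (n + 1) → S), y ≠ r 0 → W y r = 0 := by
      intro y r hy
      have : μ y (Cy n r) = 0 := by
        rw [cy_measure hμ y n r, if_neg (fun h => hy h.symm), zero_mul]
      rw [hW]; simp only [this, zero_mul, mul_zero]
    -- main chain
    have step1 : ∑' q : Fin (n + 2) → S, T q = ∑' p : S × (Fin (n + 1) → S), T (e p) :=
      (e.tsum_eq T).symm
    have step2 : ∑' p : S × (Fin (n + 1) → S), T (e p)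
        = ∑' (a : S) (r : Fin (n + 1) → S), T (Fin.cons a r) := by
      rw [ENNReal.tsum_prod']
      rfl
    have step3 : ∑' (a : S) (r : Fin (n + 1) → S), T (Fin.cons a r)
        = ∑' r : Fin (n + 1) → S, T (Fin.cons x r) := by
      refine tsum_eq_single x ?_
      intro a ha
      have : ∀ r : Fin (n + 1) → S, T (Fin.cons a r) = 0 := by
        intro r
        rw [hT]
        simp only
        rw [cons_measure hμ x n a r, if_neg ha, zero_mul, zero_mul, zero_mul]
      simp [this]
    have step4 : ∑' r : Fin (n + 1) → S, T (Fin.cons x r)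
        = ∑' (y : S) (r : Fin (n + 1) → S), W y r := by
      rw [← ENNReal.tsum_comm]
      refine tsum_congr fun r => ?_
      rw [hTW r]
      exact (tsum_eq_single (r 0) fun y hy => hWvanish y r hy).symm
    have hΦ : ∀ y : S, ∑' r : Fin (n + 1) → S,
        (μ y (Cy n r) * ENNReal.ofReal
          (if ∀ i : Fin (n + 1), (i : ℕ) < n → r i ∈ St then
            Real.exp (lam * (f (r (Fin.last n)) - g n y)) else 0)) ≤ C := by
      intro y
      by_cases hyn : y ∈ St ∨ n = 0
      · exact ih y hyn
      · push_neg at hyn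
        obtain ⟨hySt, hn0⟩ := hyn
        have hzero : ∀ r : Fin (n + 1) → S,
            μ y (Cy n r) * ENNReal.ofReal
              (if ∀ i : Fin (n + 1), (i : ℕ) < n → r i ∈ St then
                Real.exp (lam * (f (r (Fin.last n)) - g n y)) else 0) = 0 := by
          intro r
          by_cases hr0 : r 0 = y
          · by_cases hcond : ∀ i : Fin (n + 1), (i : ℕ) < n → r i ∈ St
            · exfalso
              exact hySt (hr0 ▸ hcond 0 (Nat.pos_of_ne_zero hn0))
            · rw [if_neg hcond, ENNReal.ofReal_zero, mul_zero]
          · have : μ y (Cy n r) = 0 := by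
              rw [cy_measure hμ y n r, if_neg hr0, zero_mul]
            rw [this, zero_mul]
        rw [tsum_congr hzero]
        simp
    have step5 : ∑' (y : S) (r : Fin (n + 1) → S), W y r
        ≤ ∑' y : S, ENNReal.ofReal (P x y) *
            ENNReal.ofReal (Real.exp (lam * (g n y - g (n + 1) x))) * C := by
      refine ENNReal.tsum_le_tsum fun y => ?_
      rw [hW]
      simp only
      rw [ENNReal.tsum_mul_left]
      exact mul_le_mul_right (hΦ y) _
    have hsb := step_bound hμ hP0 hProw St f hint β hβ α h1 h2 hx hlam hlam3 n
    have step6 : ∑' y : S, ENNReal.ofReal (P x y) *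
            ENNReal.ofReal (Real.exp (lam * (g n y - g (n + 1) x))) * C
        ≤ ENNReal.ofReal (Real.exp (α n * K)) * C := by
      have he2 : ∀ y : S, ENNReal.ofReal (P x y) *
            ENNReal.ofReal (Real.exp (lam * (g n y - g (n + 1) x))) * C
          = ENNReal.ofReal (P x y * Real.exp (lam * (g n y - g (n + 1) x))) * C := by
        intro y
        rw [ENNReal.ofReal_mul (hP0 x y)]
      rw [tsum_congr he2, ENNReal.tsum_mul_right]
      refine mul_le_mul_left ?_ C
      rw [← ENNReal.ofReal_tsum_of_nonneg
        (fun y => mul_nonneg (hP0 x y) (Real.exp_pos _).le) hsb.1]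
      exact ENNReal.ofReal_le_ofReal hsb.2
    have step7 : ENNReal.ofReal (Real.exp (α n * K)) * C
        = ENNReal.ofReal (Real.exp (K * ∑ j ∈ Finset.range (n + 1), α j)) := by
      rw [hC, ← ENNReal.ofReal_mul (Real.exp_pos _).le, ← Real.exp_add,
        Finset.sum_range_succ]
      congr 2
      ring
    calc ∑' q : Fin (n + 2) → S, T q
        = ∑' (y : S) (r : Fin (n + 1) → S), W y r := by
          rw [step1, step2, step3, step4]
    _ ≤ ∑' y : S, ENNReal.ofReal (P x y) *
          ENNReal.ofReal (Real.exp (lam * (g n y - g (n + 1) x))) * C := step5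
    _ ≤ ENNReal.ofReal (Real.exp (α n * K)) * C := step6
    _ = ENNReal.ofReal (Real.exp (K * ∑ j ∈ Finset.range (n + 1), α j)) := step7

lemma one_sided (hμ : IsMarkovChain P μ) (hP0 : ∀ x y, 0 ≤ P x y)
    (hProw : ∀ x, HasSum (P x) 1)
    (St : Set S) (f : S → ℝ) (hint : ∀ x k, Integrable (fun ω => f (ω k)) (μ x))
    (β : ℝ) (hβ : 0 < β) (α : ℕ → ℝ) (hα : ∀ i, 0 < α i)
    (h1 : ∀ (i : ℕ), ∀ x ∈ St, ∀ y, 0 < P x y → |Pf μ f i x - Pf μ f i y| ≤ β)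
    (h2 : ∀ (i : ℕ), ∀ x ∈ St, ∑' y, P x y * (Pf μ f i x - Pf μ f i y) ^ 2 ≤ α i)
    (x₀ : S) (hx₀ : x₀ ∈ St) (k : ℕ) (hk : 1 ≤ k) (m : ℝ) (hm : 0 ≤ m) :
    μ x₀ ({ω | m ≤ f (ω k) - Pf μ f k x₀} ∩ {ω | ∀ i < k, ω i ∈ St})
      ≤ ENNReal.ofReal
          (Real.exp (-(m ^ 2) / (2 * (∑ i ∈ Finset.range k, α i) + 4 * β * m / 3))) := by
  set a : ℝ := ∑ i ∈ Finset.range k, α i with ha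
  have ha0 : 0 < a :=
    Finset.sum_pos (fun i _ => hα i) (Finset.nonempty_range_iff.mpr (by omega))
  set d : ℝ := a + 2 * β * m / 3 with hd
  have hd0 : 0 < d := by
    have h23 : 0 ≤ 2 * β * m / 3 := by positivity
    rw [hd]; linarith
  set lam : ℝ := m / d with hlam_def
  have hlam : 0 ≤ lam := div_nonneg hm hd0.le
  have hlam3 : 2 * β * lam < 3 := by
    rw [hlam_def]
    have he : 2 * β * (m / d) = (2 * β * m) / d := by ring
    rw [he, div_lt_iff₀ hd0]
    rw [hd]
    nlinarith
  set K : ℝ := lam ^ 2 / (2 * (1 - 2 * β * lam / 3)) with hK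
  have h1d : 1 - 2 * β * lam / 3 = a / d := by
    rw [hlam_def]
    field_simp
    rw [hd]
    ring
  have hKd : K * a - lam * m = -(m ^ 2) / (2 * a + 4 * β * m / 3) := by
    have h2d : 2 * a + 4 * β * m / 3 = 2 * d := by rw [hd]; ring
    rw [hK, h1d, hlam_def, h2d]
    field_simp
    ring
  set B : Set (Fin (k + 1) → S) :=
    {q | m ≤ f (q (Fin.last k)) - Pf μ f k x₀ ∧ ∀ i : Fin (k + 1), (i : ℕ) < k → q i ∈ St}
    with hB
  have hEA : {ω : ℕ → S | m ≤ f (ω k) - Pf μ f k x₀} ∩ {ω | ∀ i < k, ω i ∈ St}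
      = proj k ⁻¹' B := by
    ext ω
    simp only [Set.mem_inter_iff, Set.mem_setOf_eq, Set.mem_preimage, hB]
    constructor
    · rintro ⟨hm1, hA⟩
      exact ⟨hm1, fun i hi => hA (i : ℕ) hi⟩
    · rintro ⟨hm1, hA⟩
      exact ⟨hm1, fun i hi => hA ⟨i, by omega⟩ hi⟩
  have hterm : ∀ q : Fin (k + 1) → S, Set.indicator B (fun q => μ x₀ (Cy k q)) q
      ≤ ENNReal.ofReal (Real.exp (-(lam * m))) *
        (μ x₀ (Cy k q) * ENNReal.ofReal
          (if ∀ i : Fin (k + 1), (i : ℕ) < k → q i ∈ St then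
            Real.exp (lam * (f (q (Fin.last k)) - Pf μ f k x₀)) else 0)) := by
    intro q
    by_cases hqB : q ∈ B
    · rw [Set.indicator_of_mem hqB]
      obtain ⟨hq1, hq2⟩ := hqB
      rw [if_pos hq2]
      have h1' : (1 : ℝ) ≤ Real.exp (-(lam * m)) *
          Real.exp (lam * (f (q (Fin.last k)) - Pf μ f k x₀)) := by
        rw [← Real.exp_add]
        have hnn : 0 ≤ -(lam * m) + lam * (f (q (Fin.last k)) - Pf μ f k x₀) := by
          have := mul_le_mul_of_nonneg_left hq1 hlam
          nlinarith
        nlinarith [Real.add_one_le_exp (-(lam * m) + lam * (f (q (Fin.last k)) - Pf μ f k x₀))]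
      calc μ x₀ (Cy k q) = μ x₀ (Cy k q) * 1 := (mul_one _).symm
      _ ≤ μ x₀ (Cy k q) * ENNReal.ofReal (Real.exp (-(lam * m)) *
            Real.exp (lam * (f (q (Fin.last k)) - Pf μ f k x₀))) := by
          refine mul_le_mul_right ?_ _
          rw [← ENNReal.ofReal_one]
          exact ENNReal.ofReal_le_ofReal h1'
      _ = ENNReal.ofReal (Real.exp (-(lam * m))) *
            (μ x₀ (Cy k q) * ENNReal.ofReal
              (Real.exp (lam * (f (q (Fin.last k)) - Pf μ f k x₀)))) := by
          rw [ENNReal.ofReal_mul (Real.exp_pos _).le]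
          ring
    · rw [Set.indicator_of_notMem hqB]
      exact zero_le
  have hphi := phi_bound hμ hP0 hProw St f hint β hβ α h1 h2 hlam hlam3 k x₀ (Or.inl hx₀)
  calc μ x₀ ({ω | m ≤ f (ω k) - Pf μ f k x₀} ∩ {ω | ∀ i < k, ω i ∈ St})
      = ∑' q : Fin (k + 1) → S, Set.indicator B (fun q => μ x₀ (Cy k q)) q := by
        rw [hEA, measure_proj_preimage x₀ k B]
  _ ≤ ∑' q : Fin (k + 1) → S, ENNReal.ofReal (Real.exp (-(lam * m))) *
        (μ x₀ (Cy k q) * ENNReal.ofReal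
          (if ∀ i : Fin (k + 1), (i : ℕ) < k → q i ∈ St then
            Real.exp (lam * (f (q (Fin.last k)) - Pf μ f k x₀)) else 0)) :=
      ENNReal.tsum_le_tsum hterm
  _ = ENNReal.ofReal (Real.exp (-(lam * m))) *
        ∑' q : Fin (k + 1) → S, (μ x₀ (Cy k q) * ENNReal.ofReal
          (if ∀ i : Fin (k + 1), (i : ℕ) < k → q i ∈ St then
            Real.exp (lam * (f (q (Fin.last k)) - Pf μ f k x₀)) else 0)) :=
      ENNReal.tsum_mul_left
  _ ≤ ENNReal.ofReal (Real.exp (-(lam * m))) * ENNReal.ofReal (Real.exp (K * a)) :=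
      mul_le_mul_right hphi _
  _ = ENNReal.ofReal (Real.exp (-(m ^ 2) / (2 * a + 4 * β * m / 3))) := by
      rw [← ENNReal.ofReal_mul (Real.exp_pos _).le, ← Real.exp_add]
      congr 1
      rw [← hKd]
      ring

end FreedmanAux

theorem stmt0 {S : Type*} [MeasurableSpace S] [MeasurableSingletonClass S] [Countable S]
    (P : S → S → ℝ) (hPnonneg : ∀ x y, 0 ≤ P x y) (hProw : ∀ x, HasSum (P x) 1)
    (μ : S → Measure (ℕ → S)) (hμ : IsMarkovChain P μ)
    (St : Set S) (f : S → ℝ)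
    (hint : ∀ x k, Integrable (fun ω => f (ω k)) (μ x))
    (β : ℝ) (hβ : 0 < β) (α : ℕ → ℝ) (hα : ∀ i, 0 < α i)
    (h1 : ∀ (i : ℕ), ∀ x ∈ St, ∀ y, 0 < P x y → |Pf μ f i x - Pf μ f i y| ≤ β)
    (h2 : ∀ (i : ℕ), ∀ x ∈ St, ∑' y, P x y * (Pf μ f i x - Pf μ f i y) ^ 2 ≤ α i)
    (x₀ : S) (hx₀ : x₀ ∈ St) (k : ℕ) (hk : 1 ≤ k) (m : ℝ) (hm : 0 ≤ m) :
    μ x₀ ({ω | m ≤ |f (ω k) - Pf μ f k x₀|} ∩ {ω | ∀ i < k, ω i ∈ St})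
      ≤ ENNReal.ofReal
          (2 * Real.exp (-(m ^ 2) / (2 * (∑ i ∈ Finset.range k, α i) + 4 * β * m / 3))) := by
  classical
  set f' : S → ℝ := fun s => -f s with hf'
  have hPf' : ∀ (i : ℕ) (x : S), Pf μ f' i x = - Pf μ f i x := by
    intro i x
    rw [Pf, Pf, ← integral_neg]
  have hint' : ∀ x k, Integrable (fun ω => f' (ω k)) (μ x) := fun x k => (hint x k).neg
  have h1' : ∀ (i : ℕ), ∀ x ∈ St, ∀ y, 0 < P x y → |Pf μ f' i x - Pf μ f' i y| ≤ β := by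
    intro i x hx y hy
    rw [hPf' i x, hPf' i y]
    have he : -Pf μ f i x - -Pf μ f i y = -(Pf μ f i x - Pf μ f i y) := by ring
    rw [he, abs_neg]
    exact h1 i x hx y hy
  have h2' : ∀ (i : ℕ), ∀ x ∈ St, ∑' y, P x y * (Pf μ f' i x - Pf μ f' i y) ^ 2 ≤ α i := by
    intro i x hx
    refine le_trans (le_of_eq (tsum_congr fun y => ?_)) (h2 i x hx)
    rw [hPf' i x, hPf' i y]
    ring
  have hup := FreedmanAux.one_sided hμ hPnonneg hProw St f hint β hβ α hα h1 h2
    x₀ hx₀ k hk m hm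
  have hdown := FreedmanAux.one_sided hμ hPnonneg hProw St f' hint' β hβ α hα h1' h2'
    x₀ hx₀ k hk m hm
  set A : Set (ℕ → S) := {ω | ∀ i < k, ω i ∈ St} with hA
  have hsub : {ω : ℕ → S | m ≤ |f (ω k) - Pf μ f k x₀|} ∩ A
      ⊆ ({ω : ℕ → S | m ≤ f (ω k) - Pf μ f k x₀} ∩ A)
        ∪ ({ω : ℕ → S | m ≤ f' (ω k) - Pf μ f' k x₀} ∩ A) := by
    rintro ω ⟨hω1, hω2⟩
    have hω1' : m ≤ |f (ω k) - Pf μ f k x₀| := hω1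
    rcases le_abs.mp hω1' with h | h
    · exact Or.inl ⟨h, hω2⟩
    · refine Or.inr ⟨?_, hω2⟩
      show m ≤ f' (ω k) - Pf μ f' k x₀
      rw [hf', hPf' k x₀]
      simp only
      linarith
  calc μ x₀ ({ω | m ≤ |f (ω k) - Pf μ f k x₀|} ∩ A)
      ≤ μ x₀ (({ω : ℕ → S | m ≤ f (ω k) - Pf μ f k x₀} ∩ A)
        ∪ ({ω : ℕ → S | m ≤ f' (ω k) - Pf μ f' k x₀} ∩ A)) := measure_mono hsub
  _ ≤ μ x₀ ({ω : ℕ → S | m ≤ f (ω k) - Pf μ f k x₀} ∩ A)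
      + μ x₀ ({ω : ℕ → S | m ≤ f' (ω k) - Pf μ f' k x₀} ∩ A) := measure_union_le _ _
  _ ≤ ENNReal.ofReal
          (Real.exp (-(m ^ 2) / (2 * (∑ i ∈ Finset.range k, α i) + 4 * β * m / 3)))
      + ENNReal.ofReal
          (Real.exp (-(m ^ 2) / (2 * (∑ i ∈ Finset.range k, α i) + 4 * β * m / 3))) :=
      add_le_add hup hdown
  _ = ENNReal.ofReal
          (2 * Real.exp (-(m ^ 2) / (2 * (∑ i ∈ Finset.range k, α i) + 4 * β * m / 3))) := by
      rw [← ENNReal.ofReal_add (Real.exp_pos _).le (Real.exp_pos _).le]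
      congr 1
      ring
end

section
/- Let (Q(x,y): x,y ∈ S) be the Q-matrix of a stable, conservative, non-explosive continuous-time Markov chain on a discrete state space S, with semigroup (P̂^t f)(x) := E_x f(X̂(t)). Let Ŝ ⊆ S satisfy sup_{x∈Ŝ}(−Q(x,x)) < ∞, and let f: S → ℝ be such that (P̂^t f)(x) exists for all t ≥ 0, x ∈ S, and such that |(P̂^s f)(x) − (P̂^s f)(y)| ≤ β̂ for all s ≥ 0, all x ∈ Ŝ and all y with Q(x,y) > 0, for some constant β̂ > 0. Then, for each fixed x ∈ Ŝ, the function s ↦ (P̂^s f)(x) is continuously differentiable on [0,∞). -/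
open MeasureTheory

/-- A stable, conservative, non-explosive continuous-time Markov chain on a discrete state
space `S`, encoded by its Q-matrix together with the family of path laws `law x` (the law of
the chain started at `x`).  The finite-dimensional distributions satisfy the (homogeneous)
Markov property in cylinder form, and the transition probabilities satisfy the Kolmogorov
backward equations. -/
structure CTMC (S : Type*) [MeasurableSpace S] where
  Q : S → S → ℝ
  law : S → Measure (ℝ → S)
  prob : ∀ x, IsProbabilityMeasure (law x)
  start : ∀ x, law x {ω | ω 0 = x} = 1
  offdiag_nonneg : ∀ x y, x ≠ y → 0 ≤ Q x y
  conservative : ∀ x, HasSum (Q x) 0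
  markov : ∀ (x : S) (n : ℕ) (t : ℕ → ℝ) (path : ℕ → S),
    StrictMonoOn t (Set.Iic n) → t 0 = 0 → path 0 = x →
    law x {ω | ∀ i ≤ n, ω (t i) = path i}
      = ∏ i ∈ Finset.range n, law (path i) {ω | ω (t (i + 1) - t i) = path (i + 1)}
  backward : ∀ (x y : S) (t : ℝ), 0 ≤ t →
    HasDerivWithinAt (fun s => (law x {ω | ω s = y}).toReal)
      (∑' z, Q x z * (law z {ω | ω t = y}).toReal) (Set.Ici 0) t

/-- `(P̂^t f)(x) = E_x [f(X̂(t))]`. -/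
noncomputable def CTMC.Pt {S : Type*} [MeasurableSpace S] (ch : CTMC S)
    (f : S → ℝ) (t : ℝ) (x : S) : ℝ :=
  ∫ ω, f (ω t) ∂ ch.law x

namespace CTMCreg

open Set Real Filter
open scoped Classical ENNReal NNReal

variable {S : Type*} [MeasurableSpace S] [MeasurableSingletonClass S] [Countable S]

/-- transition probability -/
noncomputable def pm (ch : CTMC S) (x : S) (t : ℝ) (y : S) : ℝ :=
  (ch.law x {ω | ω t = y}).toReal

lemma measurableSet_ev (t : ℝ) (y : S) : MeasurableSet {ω : ℝ → S | ω t = y} := by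
  have : {ω : ℝ → S | ω t = y} = (fun ω : ℝ → S => ω t) ⁻¹' {y} := rfl
  rw [this]
  exact measurable_pi_apply t (measurableSet_singleton y)

lemma pm_nonneg (ch : CTMC S) (x : S) (t : ℝ) (y : S) : 0 ≤ pm ch x t y :=
  ENNReal.toReal_nonneg

lemma pm_le_one (ch : CTMC S) (x : S) (t : ℝ) (y : S) : pm ch x t y ≤ 1 := by
  haveI := ch.prob x
  have h := prob_le_one (μ := ch.law x) (s := {ω | ω t = y})
  simpa [pm] using ENNReal.toReal_mono (by simp) h

lemma pm_zero (ch : CTMC S) (x y : S) : pm ch x 0 y = if y = x then 1 else 0 := by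
  haveI := ch.prob x
  by_cases h : y = x
  · subst h
    simp [pm, ch.start y]
  · have hsub : {ω : ℝ → S | ω 0 = y} ⊆ {ω : ℝ → S | ω 0 = x}ᶜ := by
      intro ω hω hω'
      exact h (hω.symm.trans hω')
    have hc : ch.law x {ω | ω 0 = x}ᶜ = 0 := by
      rw [measure_compl (measurableSet_ev 0 x) (measure_ne_top _ _), ch.start x]
      simp
    have : ch.law x {ω | ω 0 = y} = 0 := measure_mono_null hsub hc
    simp [pm, this, h]

lemma summable_Q (ch : CTMC S) (x : S) : Summable (ch.Q x) := ⟨0, ch.conservative x⟩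

/-- the off-diagonal rates -/
noncomputable def Qo (ch : CTMC S) (x w : S) : ℝ := if w = x then 0 else ch.Q x w

lemma Qo_nonneg (ch : CTMC S) (x w : S) : 0 ≤ Qo ch x w := by
  unfold Qo
  split
  · exact le_rfl
  · exact ch.offdiag_nonneg x w (fun h => (by simp_all) : x ≠ w)

lemma summable_Qo (ch : CTMC S) (x : S) : Summable (Qo ch x) := by
  apply (summable_Q ch x).abs.of_norm_bounded
  intro w
  unfold Qo
  split <;> simp [abs_nonneg, le_abs_self]

lemma tsum_Qo (ch : CTMC S) (x : S) : ∑' w, Qo ch x w = -ch.Q x x := by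
  have h := Summable.tsum_eq_add_tsum_ite (summable_Q ch x) x
  have h0 : ∑' w, ch.Q x w = 0 := (ch.conservative x).tsum_eq
  rw [h0] at h
  have : ∑' w, Qo ch x w = ∑' w, if w = x then 0 else ch.Q x w := rfl
  linarith [this ▸ h]

/-- the (off-diagonal part of the) backward-equation integrand -/
noncomputable def R (ch : CTMC S) (x y : S) (s : ℝ) : ℝ :=
  ∑' w, Qo ch x w * pm ch w s y

lemma summable_R (ch : CTMC S) (x y : S) (s : ℝ) :
    Summable fun w => Qo ch x w * pm ch w s y := by
  apply (summable_Qo ch x).of_norm_bounded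
  intro w
  rw [Real.norm_eq_abs, abs_mul, abs_of_nonneg (Qo_nonneg ch x w),
    abs_of_nonneg (pm_nonneg ch w s y)]
  calc Qo ch x w * pm ch w s y ≤ Qo ch x w * 1 :=
        mul_le_mul_of_nonneg_left (pm_le_one ch w s y) (Qo_nonneg ch x w)
    _ = Qo ch x w := mul_one _

lemma R_nonneg (ch : CTMC S) (x y : S) (s : ℝ) : 0 ≤ R ch x y s :=
  tsum_nonneg fun w => mul_nonneg (Qo_nonneg ch x w) (pm_nonneg ch w s y)

lemma pm_continuousOn (ch : CTMC S) (x y : S) :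
    ContinuousOn (fun s => pm ch x s y) (Set.Ici 0) := by
  intro t ht
  exact (ch.backward x y t ht).continuousWithinAt

lemma R_continuousOn (ch : CTMC S) (x y : S) :
    ContinuousOn (R ch x y) (Set.Ici 0) := by
  apply continuousOn_tsum (u := fun w => Qo ch x w)
  · intro w
    exact continuousOn_const.mul (pm_continuousOn ch w y)
  · exact summable_Qo ch x
  · intro w s _
    rw [Real.norm_eq_abs, abs_mul, abs_of_nonneg (Qo_nonneg ch x w),
      abs_of_nonneg (pm_nonneg ch w s y)]
    calc Qo ch x w * pm ch w s y ≤ Qo ch x w * 1 :=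
          mul_le_mul_of_nonneg_left (pm_le_one ch w s y) (Qo_nonneg ch x w)
      _ = Qo ch x w := mul_one _

lemma hasDeriv_exp_pm (ch : CTMC S) (x y : S) {t : ℝ} (ht : 0 ≤ t) :
    HasDerivWithinAt (fun s => Real.exp (-ch.Q x x * s) * pm ch x s y)
      (Real.exp (-ch.Q x x * t) * R ch x y t) (Set.Ici 0) t := by
  set q : ℝ := -ch.Q x x with hqdef
  have hsum : Summable fun z => ch.Q x z * pm ch z t y := by
    apply (summable_Q ch x).abs.of_norm_bounded
    intro z
    rw [Real.norm_eq_abs, abs_mul, abs_of_nonneg (pm_nonneg ch z t y)]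
    calc |ch.Q x z| * pm ch z t y ≤ |ch.Q x z| * 1 :=
          mul_le_mul_of_nonneg_left (pm_le_one ch z t y) (abs_nonneg _)
      _ = |ch.Q x z| := mul_one _
  have hval : (∑' z, ch.Q x z * pm ch z t y) = ch.Q x x * pm ch x t y + R ch x y t := by
    rw [Summable.tsum_eq_add_tsum_ite hsum x]
    congr 1
    unfold R
    apply tsum_congr
    intro w
    unfold Qo
    split <;> simp
  have hpm : HasDerivWithinAt (fun s => pm ch x s y)
      (ch.Q x x * pm ch x t y + R ch x y t) (Set.Ici 0) t := by
    have h := ch.backward x y t ht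
    rw [show (∑' (z : S), ch.Q x z * ((ch.law z) {ω | ω t = y}).toReal)
      = ch.Q x x * pm ch x t y + R ch x y t from hval] at h
    exact h
  have hexp : HasDerivWithinAt (fun s => Real.exp (q * s)) (q * Real.exp (q * t))
      (Set.Ici 0) t := by
    have h1 : HasDerivAt (fun s : ℝ => q * s) q t := by
      simpa using (hasDerivAt_id t).const_mul q
    have h2 : HasDerivAt (fun s => Real.exp (q * s)) (Real.exp (q * t) * q) t := h1.exp
    have h3 : HasDerivAt (fun s => Real.exp (q * s)) (q * Real.exp (q * t)) t := by
      simpa [mul_comm] using h2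
    exact h3.hasDerivWithinAt
  have := hexp.mul hpm
  refine HasDerivWithinAt.congr_deriv this ?_
  rw [hqdef]
  ring

lemma exp_pm_sub (ch : CTMC S) (x y : S) {t₁ t₂ : ℝ} (h1 : 0 ≤ t₁) (h12 : t₁ ≤ t₂) :
    Real.exp (-ch.Q x x * t₂) * pm ch x t₂ y - Real.exp (-ch.Q x x * t₁) * pm ch x t₁ y
      = ∫ s in t₁..t₂, Real.exp (-ch.Q x x * s) * R ch x y s := by
  have key := intervalIntegral.integral_eq_sub_of_hasDeriv_right_of_le h12
    (f := fun s => Real.exp (-ch.Q x x * s) * pm ch x s y)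
    (f' := fun s => Real.exp (-ch.Q x x * s) * R ch x y s)
    ?_ ?_ ?_
  · exact key.symm
  · intro s hs
    have hs0 : (0:ℝ) ≤ s := le_trans h1 hs.1
    exact ((hasDeriv_exp_pm ch x y hs0).continuousWithinAt).mono
      (fun u hu => le_trans h1 hu.1 : Set.Icc t₁ t₂ ⊆ Set.Ici 0)
  · intro s hs
    have hs0 : (0:ℝ) ≤ s := le_trans h1 (le_of_lt hs.1)
    exact (hasDeriv_exp_pm ch x y hs0).mono
      (fun u hu => le_trans hs0 (le_of_lt hu) : Set.Ioi s ⊆ Set.Ici 0)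
  · apply ContinuousOn.intervalIntegrable
    apply ContinuousOn.mono (s := Set.Ici 0)
    · exact ((Real.continuous_exp.comp (continuous_const.mul continuous_id)).continuousOn).mul
        (R_continuousOn ch x y)
    · rw [Set.uIcc_of_le h12]
      intro u hu; exact le_trans h1 hu.1

lemma integrand_nonneg (ch : CTMC S) (x y : S) (s : ℝ) :
    0 ≤ Real.exp (-ch.Q x x * s) * R ch x y s :=
  mul_nonneg (Real.exp_pos _).le (R_nonneg ch x y s)

section WithF

variable (ch : CTMC S) (f : S → ℝ)

lemma Pt_eq_tsum
    (hint : ∀ (t : ℝ), 0 ≤ t → ∀ x, Integrable (fun ω => f (ω t)) (ch.law x))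
    {t : ℝ} (ht : 0 ≤ t) (x : S) :
    ch.Pt f t x = ∑' y, f y * pm ch x t y := by
  haveI := ch.prob x
  have hmeas : Measurable fun ω : ℝ → S => ω t := measurable_pi_apply t
  have hfmeas : Measurable f := measurable_of_countable f
  have hmap : ∀ y : S, (ch.law x).map (fun ω => ω t) {y} = ch.law x {ω | ω t = y} := by
    intro y
    rw [Measure.map_apply hmeas (measurableSet_singleton y)]
    rfl
  have hI : Integrable f ((ch.law x).map fun ω => ω t) := by
    rw [integrable_map_measure hfmeas.aestronglyMeasurable hmeas.aemeasurable]
    exact hint t ht x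
  have h1 : ch.Pt f t x = ∫ y, f y ∂((ch.law x).map fun ω => ω t) := by
    rw [integral_map hmeas.aemeasurable hfmeas.aestronglyMeasurable]
    rfl
  rw [h1, integral_countable' hI]
  apply tsum_congr
  intro y
  rw [measureReal_def, hmap y]
  simp [pm, mul_comm]

lemma summable_abs_pm
    (hint : ∀ (t : ℝ), 0 ≤ t → ∀ x, Integrable (fun ω => f (ω t)) (ch.law x))
    {t : ℝ} (ht : 0 ≤ t) (x : S) :
    Summable fun y => |f y| * pm ch x t y := by
  haveI := ch.prob x
  have hmeas : Measurable fun ω : ℝ → S => ω t := measurable_pi_apply t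
  have hfmeas : Measurable f := measurable_of_countable f
  have hI : Integrable f ((ch.law x).map fun ω => ω t) := by
    rw [integrable_map_measure hfmeas.aestronglyMeasurable hmeas.aemeasurable]
    exact hint t ht x
  have hfin : ∫⁻ y, ‖f y‖₊ ∂((ch.law x).map fun ω => ω t) ≠ ⊤ := hI.2.ne
  rw [lintegral_countable' (fun y => (‖f y‖₊ : ℝ≥0∞))] at hfin
  have hsum := ENNReal.summable_toReal hfin
  apply hsum.congr
  intro y
  have hc1 : ((‖f y‖₊ : ℝ≥0∞)).toReal = |f y| := by simp [Real.norm_eq_abs]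
  have hc2 : ((ch.law x).map fun ω => ω t) {y} = ch.law x {ω | ω t = y} := by
    rw [Measure.map_apply hmeas (measurableSet_singleton y)]
    rfl
  rw [ENNReal.toReal_mul, hc1, hc2]
  rfl

lemma summable_f_pm
    (hint : ∀ (t : ℝ), 0 ≤ t → ∀ x, Integrable (fun ω => f (ω t)) (ch.law x))
    {t : ℝ} (ht : 0 ≤ t) (x : S) :
    Summable fun y => f y * pm ch x t y := by
  apply Summable.of_norm_bounded (summable_abs_pm ch f hint ht x)
  intro y
  rw [Real.norm_eq_abs, abs_mul, abs_of_nonneg (pm_nonneg ch x t y)]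

/-- `P^t |f| (x)`, as a tsum. -/
noncomputable def Gx (x : S) (t : ℝ) : ℝ := ∑' y, |f y| * pm ch x t y

/-- `exp(q_x t) P^t f (x)` -/
noncomputable def Ax (x : S) (t : ℝ) : ℝ := Real.exp (-ch.Q x x * t) * ch.Pt f t x

/-- `exp(q_x t) P^t |f| (x)` -/
noncomputable def Kx (x : S) (t : ℝ) : ℝ := Real.exp (-ch.Q x x * t) * Gx ch f x t

lemma abs_Pt_le (hint : ∀ (t : ℝ), 0 ≤ t → ∀ x, Integrable (fun ω => f (ω t)) (ch.law x))
    {t : ℝ} (ht : 0 ≤ t) (x : S) : |ch.Pt f t x| ≤ Gx ch f x t := by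
  rw [Pt_eq_tsum ch f hint ht x]
  have := norm_tsum_le_tsum_norm (f := fun y => f y * pm ch x t y) ?_
  · refine le_trans this (le_of_eq ?_)
    unfold Gx
    apply tsum_congr
    intro y
    rw [Real.norm_eq_abs, abs_mul, abs_of_nonneg (pm_nonneg ch x t y)]
  · apply (summable_abs_pm ch f hint ht x).congr
    intro y
    rw [Real.norm_eq_abs, abs_mul, abs_of_nonneg (pm_nonneg ch x t y)]

lemma A_sub_eq (hint : ∀ (t : ℝ), 0 ≤ t → ∀ x, Integrable (fun ω => f (ω t)) (ch.law x))
    (x : S) {t₁ t₂ : ℝ} (h1 : 0 ≤ t₁) (h12 : t₁ ≤ t₂) :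
    Ax ch f x t₂ - Ax ch f x t₁
      = ∑' y, f y * ∫ s in t₁..t₂, Real.exp (-ch.Q x x * s) * R ch x y s := by
  have h2 : (0:ℝ) ≤ t₂ := le_trans h1 h12
  have hs1 := (summable_f_pm ch f hint h1 x).mul_left (Real.exp (-ch.Q x x * t₁))
  have hs2 := (summable_f_pm ch f hint h2 x).mul_left (Real.exp (-ch.Q x x * t₂))
  unfold Ax
  rw [Pt_eq_tsum ch f hint h1 x, Pt_eq_tsum ch f hint h2 x, ← tsum_mul_left, ← tsum_mul_left,
    ← Summable.tsum_sub hs2 hs1]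
  apply tsum_congr
  intro y
  rw [← exp_pm_sub ch x y h1 h12]
  ring

lemma K_sub_eq (hint : ∀ (t : ℝ), 0 ≤ t → ∀ x, Integrable (fun ω => f (ω t)) (ch.law x))
    (x : S) {t₁ t₂ : ℝ} (h1 : 0 ≤ t₁) (h12 : t₁ ≤ t₂) :
    Kx ch f x t₂ - Kx ch f x t₁
      = ∑' y, |f y| * ∫ s in t₁..t₂, Real.exp (-ch.Q x x * s) * R ch x y s := by
  have h2 : (0:ℝ) ≤ t₂ := le_trans h1 h12
  have hs1 := (summable_abs_pm ch f hint h1 x).mul_left (Real.exp (-ch.Q x x * t₁))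
  have hs2 := (summable_abs_pm ch f hint h2 x).mul_left (Real.exp (-ch.Q x x * t₂))
  unfold Kx Gx
  rw [← tsum_mul_left, ← tsum_mul_left, ← Summable.tsum_sub hs2 hs1]
  apply tsum_congr
  intro y
  rw [← exp_pm_sub ch x y h1 h12]
  ring

lemma summable_K_fam
    (hint : ∀ (t : ℝ), 0 ≤ t → ∀ x, Integrable (fun ω => f (ω t)) (ch.law x))
    (x : S) {t₁ t₂ : ℝ} (h1 : 0 ≤ t₁) (h12 : t₁ ≤ t₂) :
    Summable fun y => |f y| * ∫ s in t₁..t₂, Real.exp (-ch.Q x x * s) * R ch x y s := by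
  have h2 : (0:ℝ) ≤ t₂ := le_trans h1 h12
  have hs1 := (summable_abs_pm ch f hint h1 x).mul_left (Real.exp (-ch.Q x x * t₁))
  have hs2 := (summable_abs_pm ch f hint h2 x).mul_left (Real.exp (-ch.Q x x * t₂))
  apply (hs2.sub hs1).congr
  intro y
  rw [← exp_pm_sub ch x y h1 h12]
  ring

lemma abs_A_sub_le
    (hint : ∀ (t : ℝ), 0 ≤ t → ∀ x, Integrable (fun ω => f (ω t)) (ch.law x))
    (x : S) {t₁ t₂ : ℝ} (h1 : 0 ≤ t₁) (h12 : t₁ ≤ t₂) :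
    |Ax ch f x t₂ - Ax ch f x t₁| ≤ Kx ch f x t₂ - Kx ch f x t₁ := by
  rw [A_sub_eq ch f hint x h1 h12, K_sub_eq ch f hint x h1 h12]
  have hK := summable_K_fam ch f hint x h1 h12
  have habs := norm_tsum_le_tsum_norm
    (f := fun y => f y * ∫ s in t₁..t₂, Real.exp (-ch.Q x x * s) * R ch x y s) ?_
  · refine le_trans habs (le_of_eq (tsum_congr fun y => ?_))
    have hnn : 0 ≤ ∫ s in t₁..t₂, Real.exp (-ch.Q x x * s) * R ch x y s :=
      intervalIntegral.integral_nonneg h12 (fun s _ => integrand_nonneg ch x y s)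
    rw [Real.norm_eq_abs, abs_mul, abs_of_nonneg hnn]
  · apply hK.congr
    intro y
    have hnn : 0 ≤ ∫ s in t₁..t₂, Real.exp (-ch.Q x x * s) * R ch x y s :=
      intervalIntegral.integral_nonneg h12 (fun s _ => integrand_nonneg ch x y s)
    rw [Real.norm_eq_abs, abs_mul, abs_of_nonneg hnn]

lemma K_mono (hint : ∀ (t : ℝ), 0 ≤ t → ∀ x, Integrable (fun ω => f (ω t)) (ch.law x))
    (x : S) {t₁ t₂ : ℝ} (h1 : 0 ≤ t₁) (h12 : t₁ ≤ t₂) :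
    Kx ch f x t₁ ≤ Kx ch f x t₂ := by
  have := K_sub_eq ch f hint x h1 h12
  have hnn : 0 ≤ ∑' y, |f y| * ∫ s in t₁..t₂, Real.exp (-ch.Q x x * s) * R ch x y s := by
    apply tsum_nonneg
    intro y
    exact mul_nonneg (abs_nonneg _)
      (intervalIntegral.integral_nonneg h12 (fun s _ => integrand_nonneg ch x y s))
  linarith

/-- The dominating ENNReal-valued integrand. -/
noncomputable def Psi (x : S) (s : ℝ) : ℝ≥0∞ :=
  ∑' y, ENNReal.ofReal (|f y| * (Real.exp (-ch.Q x x * s) * R ch x y s))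

lemma Fy_continuousOn (x y : S) :
    ContinuousOn (fun s => Real.exp (-ch.Q x x * s) * R ch x y s) (Set.Ici 0) :=
  ((Real.continuous_exp.comp (continuous_const.mul continuous_id)).continuousOn).mul
    (R_continuousOn ch x y)

lemma Fy_integrableOn (x y : S) {t₁ t₂ : ℝ} (h1 : 0 ≤ t₁) (h12 : t₁ ≤ t₂) (c : ℝ) :
    IntegrableOn (fun s => c * (Real.exp (-ch.Q x x * s) * R ch x y s))
      (Set.Ioc t₁ t₂) volume := by
  apply IntegrableOn.mono_set (t := Set.Icc t₁ t₂) _ Set.Ioc_subset_Icc_self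
  apply ContinuousOn.integrableOn_Icc
  exact continuousOn_const.mul ((Fy_continuousOn ch x y).mono
    (fun u hu => le_trans h1 hu.1))

lemma aemeas_Fy (x y : S) {t₁ t₂ : ℝ} (h1 : 0 ≤ t₁) :
    AEMeasurable (fun s => ENNReal.ofReal
        (|f y| * (Real.exp (-ch.Q x x * s) * R ch x y s)))
      (volume.restrict (Set.Ioc t₁ t₂)) := by
  apply ENNReal.measurable_ofReal.comp_aemeasurable
  apply ContinuousOn.aemeasurable _ measurableSet_Ioc
  apply ContinuousOn.mono (s := Set.Ici 0)
  · exact continuousOn_const.mul (Fy_continuousOn ch x y)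
  · intro u hu; exact le_trans h1 (le_of_lt hu.1)

lemma lint_per (x y : S) {t₁ t₂ : ℝ} (h1 : 0 ≤ t₁) (h12 : t₁ ≤ t₂) (c : ℝ) :
    ∫⁻ s in Set.Ioc t₁ t₂,
      ENNReal.ofReal (|c| * (Real.exp (-ch.Q x x * s) * R ch x y s))
      = ENNReal.ofReal (|c| * ∫ s in t₁..t₂, Real.exp (-ch.Q x x * s) * R ch x y s) := by
  have hfi := Fy_integrableOn ch x y h1 h12 (|c|)
  have hnn : 0 ≤ᵐ[volume.restrict (Set.Ioc t₁ t₂)]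
      fun s => |c| * (Real.exp (-ch.Q x x * s) * R ch x y s) := by
    filter_upwards with s
    exact mul_nonneg (abs_nonneg _) (integrand_nonneg ch x y s)
  rw [← ofReal_integral_eq_lintegral_ofReal hfi hnn]
  congr 1
  rw [intervalIntegral.integral_of_le h12, ← MeasureTheory.integral_const_mul]

lemma lint_K (hint : ∀ (t : ℝ), 0 ≤ t → ∀ x, Integrable (fun ω => f (ω t)) (ch.law x))
    (x : S) {t₁ t₂ : ℝ} (h1 : 0 ≤ t₁) (h12 : t₁ ≤ t₂) :
    ∫⁻ s in Set.Ioc t₁ t₂, Psi ch f x s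
      = ENNReal.ofReal (Kx ch f x t₂ - Kx ch f x t₁) := by
  unfold Psi
  rw [lintegral_tsum (fun y => aemeas_Fy ch f x y h1)]
  have hper : ∀ y : S, ∫⁻ s in Set.Ioc t₁ t₂,
      ENNReal.ofReal (|f y| * (Real.exp (-ch.Q x x * s) * R ch x y s))
      = ENNReal.ofReal (|f y| * ∫ s in t₁..t₂, Real.exp (-ch.Q x x * s) * R ch x y s) :=
    fun y => lint_per ch x y h1 h12 (f y)
  rw [tsum_congr hper, ← ENNReal.ofReal_tsum_of_nonneg, ← K_sub_eq ch f hint x h1 h12]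
  · intro y
    exact mul_nonneg (abs_nonneg _)
      (intervalIntegral.integral_nonneg h12 (fun s _ => integrand_nonneg ch x y s))
  · exact summable_K_fam ch f hint x h1 h12

lemma K_continuousOn
    (hint : ∀ (t : ℝ), 0 ≤ t → ∀ x, Integrable (fun ω => f (ω t)) (ch.law x))
    (x : S) : ContinuousOn (Kx ch f x) (Set.Ici 0) := by
  intro t₀ ht₀
  have hT : (0:ℝ) ≤ t₀ + 1 := by linarith [ht₀.out]
  -- continuity on Icc 0 (t₀+1)
  have hKicc : ContinuousOn (Kx ch f x) (Set.Icc 0 (t₀ + 1)) := by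
    set T := t₀ + 1
    have hmeasPsi : AEMeasurable (Psi ch f x) (volume.restrict (Set.Ioc (0:ℝ) T)) := by
      exact AEMeasurable.ennreal_tsum (fun y => aemeas_Fy ch f x y le_rfl)
    have hfin : ∫⁻ s in Set.Ioc (0:ℝ) T, Psi ch f x s ≠ ⊤ := by
      rw [lint_K ch f hint x le_rfl hT]
      exact ENNReal.ofReal_ne_top
    have hintPsi : IntegrableOn (fun s => (Psi ch f x s).toReal) (Set.Ioc (0:ℝ) T) volume :=
      integrable_toReal_of_lintegral_ne_top hmeasPsi hfin
    have heq : ∀ t ∈ Set.Icc (0:ℝ) T,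
        Kx ch f x t = Kx ch f x 0 + ∫ s in Set.Ioc (0:ℝ) t, (Psi ch f x s).toReal := by
      intro t ht
      have h12 : (0:ℝ) ≤ t := ht.1
      have hsub : Set.Ioc (0:ℝ) t ⊆ Set.Ioc (0:ℝ) T := Set.Ioc_subset_Ioc le_rfl ht.2
      have hmeas' : AEMeasurable (Psi ch f x) (volume.restrict (Set.Ioc (0:ℝ) t)) := by
        exact AEMeasurable.ennreal_tsum (fun y => aemeas_Fy ch f x y le_rfl)
      have hlt : ∫⁻ s in Set.Ioc (0:ℝ) t, Psi ch f x s ≠ ⊤ := by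
        rw [lint_K ch f hint x le_rfl h12]
        exact ENNReal.ofReal_ne_top
      have : ∫ s in Set.Ioc (0:ℝ) t, (Psi ch f x s).toReal
          = (∫⁻ s in Set.Ioc (0:ℝ) t, Psi ch f x s).toReal := by
        apply integral_toReal hmeas'
        exact ae_lt_top' hmeas' hlt
      rw [this, lint_K ch f hint x le_rfl h12, ENNReal.toReal_ofReal]
      · ring
      · linarith [K_mono ch f hint x le_rfl h12]
    have hcont : ContinuousOn (fun t => Kx ch f x 0 + ∫ s in Set.Ioc (0:ℝ) t,
        (Psi ch f x s).toReal) (Set.Icc 0 T) := by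
      apply continuousOn_const.add
      apply intervalIntegral.continuousOn_primitive
      rw [integrableOn_Icc_iff_integrableOn_Ioc]
      exact hintPsi
    exact (hcont.congr heq)
  have hmem : Set.Icc (0:ℝ) (t₀ + 1) ∈ nhdsWithin t₀ (Set.Ici 0) := by
    rw [← Set.Ici_inter_Iic]
    exact Filter.inter_mem self_mem_nhdsWithin
      (mem_nhdsWithin_of_mem_nhds (Iic_mem_nhds (by linarith)))
  exact ContinuousWithinAt.mono_of_mem_nhdsWithin (hKicc t₀ ⟨ht₀, by linarith⟩) hmem

lemma A_continuousOn
    (hint : ∀ (t : ℝ), 0 ≤ t → ∀ x, Integrable (fun ω => f (ω t)) (ch.law x))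
    (x : S) : ContinuousOn (Ax ch f x) (Set.Ici 0) := by
  intro t₀ ht₀
  have hK := (K_continuousOn ch f hint x) t₀ ht₀
  have hbound : ∀ t ∈ Set.Ici (0:ℝ), |Ax ch f x t - Ax ch f x t₀|
      ≤ |Kx ch f x t - Kx ch f x t₀| := by
    intro t ht
    rcases le_total t t₀ with h | h
    · rw [abs_sub_comm]
      calc |Ax ch f x t₀ - Ax ch f x t| ≤ Kx ch f x t₀ - Kx ch f x t :=
            abs_A_sub_le ch f hint x ht h
        _ ≤ |Kx ch f x t₀ - Kx ch f x t| := le_abs_self _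
        _ = |Kx ch f x t - Kx ch f x t₀| := abs_sub_comm _ _
    · calc |Ax ch f x t - Ax ch f x t₀| ≤ Kx ch f x t - Kx ch f x t₀ :=
            abs_A_sub_le ch f hint x ht₀.out h
        _ ≤ |Kx ch f x t - Kx ch f x t₀| := le_abs_self _
  have hKt : Filter.Tendsto (fun t => |Kx ch f x t - Kx ch f x t₀|)
      (nhdsWithin t₀ (Set.Ici 0)) (nhds 0) := by
    have hc : Filter.Tendsto (fun _ : ℝ => Kx ch f x t₀) (nhdsWithin t₀ (Set.Ici 0))
        (nhds (Kx ch f x t₀)) := tendsto_const_nhds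
    have h2 := (hK.sub hc).abs
    have h3 : |Kx ch f x t₀ - Kx ch f x t₀| = 0 := by simp
    have h2' : Filter.Tendsto (fun t => |Kx ch f x t - Kx ch f x t₀|)
        (nhdsWithin t₀ (Set.Ici 0)) (nhds (|Kx ch f x t₀ - Kx ch f x t₀|)) := h2
    rw [h3] at h2'
    exact h2'
  have hAt : Filter.Tendsto (fun t => Ax ch f x t - Ax ch f x t₀)
      (nhdsWithin t₀ (Set.Ici 0)) (nhds 0) := by
    apply squeeze_zero_norm'
    · filter_upwards [self_mem_nhdsWithin] with t ht
      simpa [Real.norm_eq_abs] using hbound t ht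
    · exact hKt
  have : Filter.Tendsto (Ax ch f x) (nhdsWithin t₀ (Set.Ici 0)) (nhds (Ax ch f x t₀)) := by
    have hc : Filter.Tendsto (fun _ : ℝ => Ax ch f x t₀) (nhdsWithin t₀ (Set.Ici 0))
        (nhds (Ax ch f x t₀)) := tendsto_const_nhds
    have h2 := hAt.add hc
    simpa using h2
  exact this

lemma Pt_continuousOn
    (hint : ∀ (t : ℝ), 0 ≤ t → ∀ x, Integrable (fun ω => f (ω t)) (ch.law x))
    (x : S) : ContinuousOn (fun t => ch.Pt f t x) (Set.Ici 0) := by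
  have heq : ∀ t : ℝ, ch.Pt f t x = Real.exp (ch.Q x x * t) * Ax ch f x t := by
    intro t
    unfold Ax
    rw [← mul_assoc, ← Real.exp_add]
    ring_nf
    simp
  have : ContinuousOn (fun t => Real.exp (ch.Q x x * t) * Ax ch f x t) (Set.Ici 0) :=
    ((Real.continuous_exp.comp (continuous_const.mul continuous_id)).continuousOn).mul
      (A_continuousOn ch f hint x)
  exact this.congr (fun t _ => heq t)

end WithF

end CTMCreg

open scoped ENNReal NNReal

theorem stmt3 {S : Type*} [MeasurableSpace S] [MeasurableSingletonClass S] [Countable S]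
    (ch : CTMC S) (Sh : Set S) (q : ℝ) (hq : ∀ x ∈ Sh, -ch.Q x x ≤ q)
    (f : S → ℝ)
    (hint : ∀ (t : ℝ), 0 ≤ t → ∀ x, Integrable (fun ω => f (ω t)) (ch.law x))
    (βh : ℝ) (hβ : 0 < βh)
    (h1 : ∀ (s : ℝ), 0 ≤ s → ∀ x ∈ Sh, ∀ y, 0 < ch.Q x y →
      |ch.Pt f s x - ch.Pt f s y| ≤ βh)
    (x : S) (hx : x ∈ Sh) :
    ContDiffOn ℝ 1 (fun s => ch.Pt f s x) (Set.Ici 0) := by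
  classical
  set D : ℝ → ℝ := fun s => ∑' w, CTMCreg.Qo ch x w * (ch.Pt f s w - ch.Pt f s x) with hDdef
  have hDbound : ∀ (s : ℝ), 0 ≤ s → ∀ w : S,
      ‖CTMCreg.Qo ch x w * (ch.Pt f s w - ch.Pt f s x)‖ ≤ CTMCreg.Qo ch x w * βh := by
    intro s hs w
    rw [Real.norm_eq_abs, abs_mul, abs_of_nonneg (CTMCreg.Qo_nonneg ch x w)]
    by_cases hw : w = x
    · simp [CTMCreg.Qo, hw]
    · by_cases hQ : 0 < ch.Q x w
      · have h' := h1 s hs x hx w hQ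
        have h'' : |ch.Pt f s w - ch.Pt f s x| ≤ βh := by rwa [abs_sub_comm] at h'
        have hQo : CTMCreg.Qo ch x w = ch.Q x w := by simp [CTMCreg.Qo, hw]
        exact mul_le_mul_of_nonneg_left h'' (CTMCreg.Qo_nonneg ch x w)
      · have h0 : ch.Q x w = 0 :=
          le_antisymm (not_lt.mp hQ) (ch.offdiag_nonneg x w (Ne.symm hw))
        simp [CTMCreg.Qo, hw, h0]
  have hDcont : ContinuousOn D (Set.Ici 0) := by
    apply continuousOn_tsum (u := fun w => CTMCreg.Qo ch x w * βh)
    · intro w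
      exact continuousOn_const.mul ((CTMCreg.Pt_continuousOn ch f hint w).sub
        (CTMCreg.Pt_continuousOn ch f hint x))
    · exact (CTMCreg.summable_Qo ch x).mul_right βh
    · intro w s hs
      exact hDbound s hs w
  set chi : ℝ → ℝ := fun t => Real.exp (-ch.Q x x * max t 0) *
    (D (max t 0) + -ch.Q x x * ch.Pt f (max t 0) x) with hchidef
  have hmax : Continuous fun t : ℝ => max t 0 := continuous_id.max continuous_const
  have hmaxmem : ∀ t : ℝ, max t 0 ∈ Set.Ici (0:ℝ) := fun t => le_max_right t 0
  have hchi_cont : Continuous chi := by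
    apply Continuous.mul
    · exact Real.continuous_exp.comp (continuous_const.mul hmax)
    · apply Continuous.add
      · exact hDcont.comp_continuous hmax hmaxmem
      · exact continuous_const.mul
          ((CTMCreg.Pt_continuousOn ch f hint x).comp_continuous hmax hmaxmem)
  -- the key integral identity
  have hId : ∀ T : ℝ, 0 ≤ T →
      Real.exp (-ch.Q x x * T) * ch.Pt f T x = f x + ∫ s in (0:ℝ)..T, chi s := by
    intro T hT
    have hA := CTMCreg.A_sub_eq ch f hint x le_rfl hT
    have hA0 : CTMCreg.Ax ch f x 0 = f x := by
      unfold CTMCreg.Ax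
      rw [mul_zero, Real.exp_zero, one_mul, CTMCreg.Pt_eq_tsum ch f hint le_rfl x]
      have hcong : ∀ y : S, f y * CTMCreg.pm ch x 0 y = if y = x then f x else 0 := by
        intro y
        rw [CTMCreg.pm_zero]
        split
        · subst ‹y = x›; simp
        · simp
      rw [tsum_congr hcong]; exact tsum_ite_eq x (fun _ => f x)
    -- step 2 : swap sum and integral
    set F : S → ℝ → ℝ := fun y s => f y * (Real.exp (-ch.Q x x * s) * CTMCreg.R ch x y s)
      with hFdef
    have hFmeas : ∀ y : S, AEStronglyMeasurable (F y)
        (volume.restrict (Set.Ioc (0:ℝ) T)) := by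
      intro y
      apply ContinuousOn.aestronglyMeasurable _ measurableSet_Ioc
      apply ContinuousOn.mono (s := Set.Ici 0)
      · exact continuousOn_const.mul (CTMCreg.Fy_continuousOn ch x y)
      · intro u hu; exact le_of_lt hu.1
    have hnormF : ∀ y : S, ∀ s : ℝ, (‖F y s‖₊ : ℝ≥0∞)
        = ENNReal.ofReal (|f y| * (Real.exp (-ch.Q x x * s) * CTMCreg.R ch x y s)) := by
      intro y s
      rw [← ENNReal.ofReal_coe_nnreal, coe_nnnorm]
      congr 1
      rw [hFdef]
      simp only []
      rw [Real.norm_eq_abs, abs_mul,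
        abs_of_nonneg (CTMCreg.integrand_nonneg ch x y s)]
    have hFlint : ∀ y : S, ∫⁻ s in Set.Ioc (0:ℝ) T, ‖F y s‖₊
        = ENNReal.ofReal (|f y| * ∫ s in (0:ℝ)..T,
            Real.exp (-ch.Q x x * s) * CTMCreg.R ch x y s) := by
      intro y
      rw [lintegral_congr (fun s => hnormF y s)]
      exact CTMCreg.lint_per ch x y le_rfl hT (f y)
    have hFsum : ∑' y, ∫⁻ s in Set.Ioc (0:ℝ) T, ‖F y s‖₊ ≠ ⊤ := by
      rw [tsum_congr hFlint, ← ENNReal.ofReal_tsum_of_nonneg]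
      · exact ENNReal.ofReal_ne_top
      · intro y
        exact mul_nonneg (abs_nonneg _) (intervalIntegral.integral_nonneg hT
          (fun s _ => CTMCreg.integrand_nonneg ch x y s))
      · exact CTMCreg.summable_K_fam ch f hint x le_rfl hT
    have hswapint := integral_tsum hFmeas hFsum
    have hstep2 : (∑' y, f y * ∫ s in (0:ℝ)..T,
          Real.exp (-ch.Q x x * s) * CTMCreg.R ch x y s)
        = ∫ s in Set.Ioc (0:ℝ) T, ∑' y, F y s := by
      rw [hswapint]
      apply tsum_congr
      intro y
      rw [intervalIntegral.integral_of_le hT, ← MeasureTheory.integral_const_mul]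
    -- step 3 : identify the integrand a.e.
    have hPsimeas : AEMeasurable (CTMCreg.Psi ch f x)
        (volume.restrict (Set.Ioc (0:ℝ) T)) :=
      AEMeasurable.ennreal_tsum (fun y => CTMCreg.aemeas_Fy ch f x y le_rfl)
    have hPsifin : ∫⁻ s in Set.Ioc (0:ℝ) T, CTMCreg.Psi ch f x s ≠ ⊤ := by
      rw [CTMCreg.lint_K ch f hint x le_rfl hT]
      exact ENNReal.ofReal_ne_top
    have hae : ∀ᵐ s ∂(volume.restrict (Set.Ioc (0:ℝ) T)), CTMCreg.Psi ch f x s < ⊤ :=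
      ae_lt_top' hPsimeas hPsifin
    have hae' : ∀ᵐ s ∂(volume : Measure ℝ), s ∈ Set.Ioc (0:ℝ) T →
        CTMCreg.Psi ch f x s < ⊤ := (ae_restrict_iff' measurableSet_Ioc).mp hae
    have hpoint : ∀ s : ℝ, s ∈ Set.Ioc (0:ℝ) T → CTMCreg.Psi ch f x s < ⊤ →
        (∑' y, F y s) = chi s := by
      intro s hsmem hPsi
      have hs0 : (0:ℝ) ≤ s := le_of_lt hsmem.1
      have hmaxs : max s 0 = s := max_eq_left hs0
      set E : ℝ := Real.exp (-ch.Q x x * s) with hEdef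
      have hEpos : 0 < E := Real.exp_pos _
      have hsum1 : Summable fun y => |f y| * (E * CTMCreg.R ch x y s) := by
        have h := ENNReal.summable_toReal hPsi.ne
        apply h.congr
        intro y
        rw [ENNReal.toReal_ofReal]
        exact mul_nonneg (abs_nonneg _) (CTMCreg.integrand_nonneg ch x y s)
      have hsumfR : Summable fun y => |f y| * CTMCreg.R ch x y s := by
        have h := hsum1.mul_left E⁻¹
        apply h.congr
        intro y
        field_simp
      -- double sums
      set F2 : S → S → ℝ := fun y w => f y * (CTMCreg.Qo ch x w * CTMCreg.pm ch w s y)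
        with hF2def
      have hF2abs : ∀ y w : S, |F2 y w| = |f y| * (CTMCreg.Qo ch x w * CTMCreg.pm ch w s y) := by
        intro y w
        rw [hF2def]
        simp only []
        rw [abs_mul, abs_of_nonneg (mul_nonneg (CTMCreg.Qo_nonneg ch x w)
          (CTMCreg.pm_nonneg ch w s y))]
      have habs : Summable fun p : S × S => |F2 p.1 p.2| := by
        apply (summable_prod_of_nonneg (fun p => abs_nonneg (F2 p.1 p.2))).mpr
        constructor
        · intro y
          apply ((CTMCreg.summable_R ch x y s).mul_left (|f y|)).congr
          intro w
          rw [hF2abs]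
        · apply hsumfR.congr
          intro y
          have : ∀ w : S, |F2 y w| = |f y| * (CTMCreg.Qo ch x w * CTMCreg.pm ch w s y) :=
            fun w => hF2abs y w
          rw [tsum_congr this, tsum_mul_left]
          rfl
      have hF2sum : Summable fun p : S × S => F2 p.1 p.2 := summable_abs_iff.mp habs
      have hswap : (∑' y, ∑' w, F2 y w) = ∑' w, ∑' y, F2 y w := by
        exact (Summable.tsum_comm (f := F2) hF2sum).symm
      have hy : ∀ y : S, (∑' w, F2 y w) = f y * CTMCreg.R ch x y s := by
        intro y
        rw [hF2def]
        simp only []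
        rw [tsum_mul_left]
        rfl
      have hw : ∀ w : S, (∑' y, F2 y w) = CTMCreg.Qo ch x w * ch.Pt f s w := by
        intro w
        have hc : ∀ y : S, F2 y w = CTMCreg.Qo ch x w * (f y * CTMCreg.pm ch w s y) := by
          intro y
          rw [hF2def]
          simp only []
          ring
        rw [tsum_congr hc, tsum_mul_left, ← CTMCreg.Pt_eq_tsum ch f hint hs0 w]
      have hmain : (∑' y, f y * CTMCreg.R ch x y s) = ∑' w, CTMCreg.Qo ch x w * ch.Pt f s w := by
        rw [← tsum_congr hy, hswap, tsum_congr hw]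
      -- summability of the w-sums
      have habs_swap : Summable fun w : S => ∑' y, |F2 y w| := by
        have h := habs.prod_symm
        have := (summable_prod_of_nonneg
          (f := fun p : S × S => |F2 p.2 p.1|) (fun p => abs_nonneg _)).mp h
        exact this.2
      have hQoPt_sum : Summable fun w => CTMCreg.Qo ch x w * ch.Pt f s w := by
        apply Summable.of_norm_bounded habs_swap
        intro w
        rw [Real.norm_eq_abs, abs_mul, abs_of_nonneg (CTMCreg.Qo_nonneg ch x w)]
        have hle := CTMCreg.abs_Pt_le ch f hint hs0 w
        calc CTMCreg.Qo ch x w * |ch.Pt f s w|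
            ≤ CTMCreg.Qo ch x w * CTMCreg.Gx ch f w s :=
              mul_le_mul_of_nonneg_left hle (CTMCreg.Qo_nonneg ch x w)
          _ = ∑' y, |F2 y w| := by
              unfold CTMCreg.Gx
              rw [← tsum_mul_left]
              apply tsum_congr
              intro y
              rw [hF2abs]
              ring
      have hQoPtx_sum : Summable fun w => CTMCreg.Qo ch x w * ch.Pt f s x :=
        (CTMCreg.summable_Qo ch x).mul_right _
      have hD_eq : D s = (∑' w, CTMCreg.Qo ch x w * ch.Pt f s w)
          - (-ch.Q x x) * ch.Pt f s x := by
        rw [hDdef]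
        simp only []
        have hc : ∀ w : S, CTMCreg.Qo ch x w * (ch.Pt f s w - ch.Pt f s x)
            = CTMCreg.Qo ch x w * ch.Pt f s w - CTMCreg.Qo ch x w * ch.Pt f s x := by
          intro w; ring
        rw [tsum_congr hc, Summable.tsum_sub hQoPt_sum hQoPtx_sum, tsum_mul_right,
          CTMCreg.tsum_Qo ch x]
      -- put it together
      have hPhi : (∑' y, F y s) = E * ∑' y, f y * CTMCreg.R ch x y s := by
        have hc : ∀ y : S, F y s = E * (f y * CTMCreg.R ch x y s) := by
          intro y
          rw [hFdef]
          simp only []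
          ring
        rw [tsum_congr hc, tsum_mul_left]
      rw [hPhi, hmain, hchidef]
      simp only [hmaxs]
      rw [hD_eq]
      ring
    have hcongr : ∫ s in Set.Ioc (0:ℝ) T, (∑' y, F y s) = ∫ s in Set.Ioc (0:ℝ) T, chi s := by
      apply setIntegral_congr_ae measurableSet_Ioc
      filter_upwards [hae'] with s hs hmem
      exact hpoint s hmem (hs hmem)
    have hIoc : ∫ s in Set.Ioc (0:ℝ) T, chi s = ∫ s in (0:ℝ)..T, chi s :=
      (intervalIntegral.integral_of_le hT).symm
    have : CTMCreg.Ax ch f x T = f x + ∫ s in (0:ℝ)..T, chi s := by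
      have := hA
      rw [hA0] at this
      rw [hstep2, hcongr, hIoc] at this
      linarith
    unfold CTMCreg.Ax at this
    exact this
  -- conclude
  have hB : ContDiff ℝ 1 fun t : ℝ => ∫ s in (0:ℝ)..t, chi s := by
    rw [contDiff_one_iff_deriv]
    constructor
    · intro t
      exact ((hchi_cont.integral_hasStrictDerivAt 0 t).hasDerivAt).differentiableAt
    · have hderiv : (deriv fun t : ℝ => ∫ s in (0:ℝ)..t, chi s) = chi := by
        funext t
        exact ((hchi_cont.integral_hasStrictDerivAt 0 t).hasDerivAt).deriv
      rw [hderiv]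
      exact hchi_cont
  have hexp1 : ContDiff ℝ 1 fun t : ℝ => Real.exp (ch.Q x x * t) :=
    (Real.contDiff_exp.comp (contDiff_const.mul contDiff_id)).of_le le_top
  have hprod : ContDiff ℝ 1 fun t : ℝ =>
      Real.exp (ch.Q x x * t) * (f x + ∫ s in (0:ℝ)..t, chi s) :=
    hexp1.mul (contDiff_const.add hB)
  apply hprod.contDiffOn.congr
  intro t ht
  have hid := hId t ht
  have hcancel : Real.exp (ch.Q x x * t) * Real.exp (-ch.Q x x * t) = 1 := by
    rw [← Real.exp_add]
    ring_nf
    exact Real.exp_zero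
  calc ch.Pt f t x = Real.exp (ch.Q x x * t) * Real.exp (-ch.Q x x * t) * ch.Pt f t x := by
        rw [hcancel, one_mul]
    _ = Real.exp (ch.Q x x * t) * (Real.exp (-ch.Q x x * t) * ch.Pt f t x) := by ring
    _ = Real.exp (ch.Q x x * t) * (f x + ∫ s in (0:ℝ)..t, chi s) := by rw [hid]
end

section
/- Let X = X^{(n)} be the Bernoulli–Laplace chain and set r_n(δ) := ⌊(n/4)·log n + δn⌋. Then for every ε > 0, every n ≥ 4, every starting state j with |j − n/2| ≥ εn, and every δ with −(1/4)·log n ≤ δ ≤ 0: d_TV(L_j(X(r_n(δ))), π^{(n)}) ≥ 1 − 192·ε^{−2}·e^{−4|δ|}. -/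
open MeasureTheory

/-- Transition matrix of the Bernoulli–Laplace chain on `{0,1,…,n} ⊆ ℕ`. -/
noncomputable def blP (n : ℕ) (j l : ℕ) : ℝ :=
  if l = j + 1 then (1 - (j : ℝ) / n) ^ 2
  else if l + 1 = j then ((j : ℝ) / n) ^ 2
  else if l = j then 1 - (1 - (j : ℝ) / n) ^ 2 - ((j : ℝ) / n) ^ 2
  else 0

/-- The stationary (hypergeometric) distribution `π⁽ⁿ⁾` of the Bernoulli–Laplace chain:
`π⁽ⁿ⁾(j) = C(n,j) C(n,n-j) / C(2n,n)`. -/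
noncomputable def blPi (n : ℕ) : Measure ℕ :=
  Measure.sum fun j =>
    (ENNReal.ofReal ((n.choose j : ℝ) * (n.choose (n - j) : ℝ) / ((2 * n).choose n : ℝ))) •
      Measure.dirac j

/-- Total variation distance between two measures. -/
noncomputable def tvDist {α : Type*} [MeasurableSpace α] (μ ν : Measure α) : ℝ :=
  ⨆ A : Set α, |(μ A).toReal - (ν A).toReal|


section Markov

variable {P : ℕ → ℕ → ℝ} {μ : ℕ → Measure (ℕ → ℕ)}


lemma cyl_meas (k : ℕ) (p : ℕ → ℕ) :
    MeasurableSet {ω : ℕ → ℕ | ∀ i ≤ k, ω i = p i} := by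
  have : {ω : ℕ → ℕ | ∀ i ≤ k, ω i = p i}
      = ⋂ i ∈ Set.Iic k, (fun ω : ℕ → ℕ => ω i) ⁻¹' {p i} := by
    ext ω; simp [Set.mem_iInter]
  rw [this]
  exact MeasurableSet.biInter (Set.to_countable _)
    (fun i _ => (measurable_pi_apply i) (measurableSet_singleton _))

lemma coord_meas (k m : ℕ) : MeasurableSet {ω : ℕ → ℕ | ω k = m} := by
  have : {ω : ℕ → ℕ | ω k = m} = (fun ω : ℕ → ℕ => ω k) ⁻¹' {m} := rfl
  rw [this]; exact (measurable_pi_apply k) (measurableSet_singleton m)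

def pthFun (k m l : ℕ) (f : Fin k → ℕ) : ℕ → ℕ :=
  fun i => if h : i < k then f ⟨i, h⟩ else if i = k then m else l

lemma pthFun_def (k m l : ℕ) (f : Fin k → ℕ) (i : ℕ) :
    pthFun k m l f i = if h : i < k then f ⟨i, h⟩ else if i = k then m else l := rfl

lemma markov_step (hμ : IsMarkovChain P μ) (x m l k : ℕ) :
    μ x {ω | ω k = m ∧ ω (k + 1) = l}
      = μ x {ω | ω k = m} * ENNReal.ofReal (P m l) := by
  classical
  have hk : ∀ f, pthFun k m l f k = m := by intro f; simp [pthFun_def]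
  have hk1 : ∀ f, pthFun k m l f (k + 1) = l := by
    intro f; simp only [pthFun_def]
    rw [dif_neg (by omega), if_neg (by omega)]
  have key : ∀ f, μ x {ω | ∀ i ≤ k + 1, ω i = pthFun k m l f i}
      = μ x {ω | ∀ i ≤ k, ω i = pthFun k m l f i} * ENNReal.ofReal (P m l) := by
    intro f
    have := hμ.2.2 x k (pthFun k m l f)
    rwa [hk f, hk1 f] at this
  have hdisj : ∀ (K : ℕ), k ≤ K → Pairwise (Function.onFun Disjoint fun f : Fin k → ℕ =>
      {ω : ℕ → ℕ | ∀ i ≤ K, ω i = pthFun k m l f i}) := by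
    intro K hK f g hfg
    obtain ⟨i, hi⟩ : ∃ i, f i ≠ g i := by
      by_contra h; push_neg at h; exact hfg (funext h)
    refine Set.disjoint_left.2 fun ω hf hg => hi ?_
    have h1 := hf i.1 (le_of_lt (lt_of_lt_of_le i.2 hK))
    have h2 := hg i.1 (le_of_lt (lt_of_lt_of_le i.2 hK))
    have e1 : pthFun k m l f i.1 = f i := by simp [pthFun_def, i.2]
    have e2 : pthFun k m l g i.1 = g i := by simp [pthFun_def, i.2]
    rw [e1] at h1; rw [e2] at h2
    rw [← h1, ← h2]
  have hU1 : {ω : ℕ → ℕ | ω k = m} = ⋃ f : Fin k → ℕ, {ω | ∀ i ≤ k, ω i = pthFun k m l f i} := by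
    ext ω
    simp only [Set.mem_setOf_eq, Set.mem_iUnion]
    constructor
    · intro h
      refine ⟨fun i => ω i.1, fun i hi => ?_⟩
      rcases lt_or_eq_of_le hi with h' | h'
      · simp [pthFun_def, h']
      · subst h'; simp [pthFun_def, h]
    · rintro ⟨f, hf⟩
      have := hf k le_rfl; rw [hk f] at this; exact this
  have hU2 : {ω : ℕ → ℕ | ω k = m ∧ ω (k+1) = l}
      = ⋃ f : Fin k → ℕ, {ω | ∀ i ≤ k + 1, ω i = pthFun k m l f i} := by
    ext ω
    simp only [Set.mem_setOf_eq, Set.mem_iUnion]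
    constructor
    · rintro ⟨h1, h2⟩
      refine ⟨fun i => ω i.1, fun i hi => ?_⟩
      rcases Nat.lt_or_ge i k with h' | h'
      · simp [pthFun_def, h']
      · have : i = k ∨ i = k + 1 := by omega
        rcases this with h'' | h''
        · rw [h'']; exact h1.trans (hk _).symm
        · rw [h'']; exact h2.trans (hk1 _).symm
    · rintro ⟨f, hf⟩
      refine ⟨?_, ?_⟩
      · have := hf k (by omega); rw [hk f] at this; exact this
      · have := hf (k+1) le_rfl; rw [hk1 f] at this; exact this
  rw [hU1, hU2, measure_iUnion (hdisj (k+1) (by omega)) (fun f => cyl_meas _ _),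
    measure_iUnion (hdisj k le_rfl) (fun f => cyl_meas _ _)]
  rw [← ENNReal.tsum_mul_right]
  exact tsum_congr key

lemma markov_law_succ (hμ : IsMarkovChain P μ) (x l k : ℕ) :
    μ x {ω | ω (k + 1) = l}
      = ∑' m, μ x {ω | ω k = m} * ENNReal.ofReal (P m l) := by
  have hU : {ω : ℕ → ℕ | ω (k+1) = l} = ⋃ m, {ω | ω k = m ∧ ω (k+1) = l} := by
    ext ω; simp
  have hd : Pairwise (Function.onFun Disjoint fun m => {ω : ℕ → ℕ | ω k = m ∧ ω (k+1) = l}) := by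
    intro a b hab
    refine Set.disjoint_left.2 fun ω hf hg => hab ?_
    rw [← hf.1, ← hg.1]
  have hm : ∀ m, MeasurableSet {ω : ℕ → ℕ | ω k = m ∧ ω (k+1) = l} :=
    fun m => (coord_meas k m).inter (coord_meas (k+1) l)
  rw [hU, measure_iUnion hd hm]
  exact tsum_congr fun m => markov_step hμ x m l k

lemma markov_law_zero (hμ : IsMarkovChain P μ) (x m : ℕ) :
    μ x {ω | ω 0 = m} = if m = x then 1 else 0 := by
  split_ifs with h
  · rw [h]; exact hμ.2.1 x
  · have hdisj : Disjoint {ω : ℕ → ℕ | ω 0 = m} {ω : ℕ → ℕ | ω 0 = x} := by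
      refine Set.disjoint_left.2 fun ω hf hg => h ?_
      rw [← hf, ← hg]
    have := hμ.1 x
    have hle : μ x {ω | ω 0 = m} + μ x {ω | ω 0 = x}
        ≤ μ x Set.univ := by
      rw [← measure_union hdisj (coord_meas 0 x)]
      exact measure_mono (Set.subset_univ _)
    rw [measure_univ, hμ.2.1 x] at hle
    have hle' : μ x {ω | ω 0 = m} + 1 ≤ 0 + 1 := by simpa using hle
    exact le_antisymm (ENNReal.le_of_add_le_add_right (by simp) hle') zero_le

end Markov
open Finset in
lemma blP_nonneg {n m l : ℕ} (hn : 0 < n) (hm : m ≤ n) : 0 ≤ blP n m l := by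
  have h0 : (0:ℝ) ≤ (m:ℝ)/n := by positivity
  have h1 : (m:ℝ)/n ≤ 1 := by
    rw [div_le_one (by exact_mod_cast hn)]; exact_mod_cast hm
  unfold blP; split_ifs <;> nlinarith

lemma blP_zero_of_gt {n m l : ℕ} (hn : 0 < n) (hm : m ≤ n) (hl : n < l) : blP n m l = 0 := by
  unfold blP
  split_ifs with h1 h2 h3
  · have : m = n := by omega
    subst this
    rw [div_self (by exact_mod_cast hn.ne')]
    ring
  · omega
  · omega
  · rfl
noncomputable def blW (μ : ℕ → Measure (ℕ → ℕ)) (j k m : ℕ) : ℝ :=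
  ((μ j) {ω | ω k = m}).toReal

section Law

open Finset ENNReal

variable {n : ℕ} {μ : ℕ → Measure (ℕ → ℕ)} {j : ℕ}

lemma mass_ne_top (hμ : IsMarkovChain (blP n) μ) (x : ℕ) (S : Set (ℕ → ℕ)) : μ x S ≠ ⊤ := by
  haveI := hμ.1 x
  exact (measure_lt_top (μ x) S).ne

lemma mass_zero_of_gt (hμ : IsMarkovChain (blP n) μ) (hn : 0 < n) (hj : j ≤ n) :
    ∀ k m, n < m → μ j {ω | ω k = m} = 0 := by
  intro k
  induction k with
  | zero =>
    intro m hm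
    rw [markov_law_zero hμ j m, if_neg (by omega)]
  | succ k ih =>
    intro m hm
    rw [markov_law_succ hμ j m k]
    refine ENNReal.tsum_eq_zero.2 fun l => ?_
    rcases le_or_gt l n with hl | hl
    · rw [blP_zero_of_gt hn hl hm]; simp
    · rw [ih l hl]; simp

lemma blW_nonneg (k m : ℕ) : 0 ≤ blW μ j k m := ENNReal.toReal_nonneg

lemma blW_rec (hμ : IsMarkovChain (blP n) μ) (hn : 0 < n) (hj : j ≤ n) (k l : ℕ) :
    blW μ j (k + 1) l = ∑ m ∈ range (n + 1), blW μ j k m * blP n m l := by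
  unfold blW
  rw [markov_law_succ hμ j l k]
  rw [tsum_eq_sum (s := range (n+1)) (fun m hm => by
    rw [mass_zero_of_gt hμ hn hj k m (by simpa using hm)]; simp)]
  rw [ENNReal.toReal_sum (fun m _ => ENNReal.mul_ne_top (mass_ne_top hμ j _) ENNReal.ofReal_ne_top)]
  refine Finset.sum_congr rfl fun m hm => ?_
  rw [ENNReal.toReal_mul, ENNReal.toReal_ofReal (blP_nonneg hn (by simpa [Nat.lt_succ_iff] using hm))]

lemma blW_zero (hμ : IsMarkovChain (blP n) μ) (m : ℕ) :
    blW μ j 0 m = if m = j then 1 else 0 := by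
  unfold blW
  rw [markov_law_zero hμ j m]
  split_ifs <;> simp

lemma blW_total (hμ : IsMarkovChain (blP n) μ) (hn : 0 < n) (hj : j ≤ n) (k : ℕ) :
    ∑ m ∈ range (n + 1), blW μ j k m = 1 := by
  have hU : (Set.univ : Set (ℕ → ℕ)) = ⋃ m, {ω | ω k = m} := by
    ext ω; simp
  have hd : Pairwise (Function.onFun Disjoint fun m => {ω : ℕ → ℕ | ω k = m}) := by
    intro a b hab
    refine Set.disjoint_left.2 fun ω hf hg => hab ?_
    rw [← hf, ← hg]
  haveI := hμ.1 j
  have h1 : (1 : ℝ≥0∞) = ∑' m, μ j {ω | ω k = m} := by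
    rw [← measure_univ (μ := μ j), hU, measure_iUnion hd (fun m => coord_meas k m)]
  rw [tsum_eq_sum (s := range (n+1)) (fun m hm => by
    rw [mass_zero_of_gt hμ hn hj k m (by simpa using hm)])] at h1
  have := congrArg ENNReal.toReal h1
  rw [ENNReal.toReal_one, ENNReal.toReal_sum (fun m _ => mass_ne_top hμ j _)] at this
  exact this.symm

lemma blW_map (hμ : IsMarkovChain (blP n) μ) (hn : 0 < n) (hj : j ≤ n) (r : ℕ) (A : Set ℕ) :
    ((Measure.map (fun ω : ℕ → ℕ => ω r) (μ j)) A).toReal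
      = ∑ m ∈ range (n + 1), A.indicator (fun m => blW μ j r m) m := by
  classical
  rw [Measure.map_apply (measurable_pi_apply r) (show MeasurableSet A from trivial)]
  have hU : (fun ω : ℕ → ℕ => ω r) ⁻¹' A
      = ⋃ m, (if m ∈ A then {ω : ℕ → ℕ | ω r = m} else ∅) := by
    ext ω
    simp only [Set.mem_preimage, Set.mem_iUnion]
    constructor
    · intro h; exact ⟨ω r, by rw [if_pos h]; rfl⟩
    · rintro ⟨m, hm⟩
      by_cases h : m ∈ A
      · rw [if_pos h] at hm; have : ω r = m := hm; rwa [this]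
      · rw [if_neg h] at hm; exact absurd hm (Set.notMem_empty ω)
  have hd : Pairwise (Function.onFun Disjoint fun m => (if m ∈ A then {ω : ℕ → ℕ | ω r = m} else ∅)) := by
    intro a b hab
    refine Set.disjoint_left.2 fun ω hf hg => hab ?_
    simp only at hf hg
    split_ifs at hf hg
    · have h1 : ω r = a := hf
      have h2 : ω r = b := hg
      rw [← h1, ← h2]
    · exact absurd hg (Set.notMem_empty ω)
    · exact absurd hf (Set.notMem_empty ω)
    · exact absurd hf (Set.notMem_empty ω)
  have hmeas : ∀ m, MeasurableSet (if m ∈ A then {ω : ℕ → ℕ | ω r = m} else ∅) := by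
    intro m; split_ifs
    · exact coord_meas r m
    · exact MeasurableSet.empty
  rw [hU, measure_iUnion hd hmeas]
  rw [tsum_eq_sum (s := range (n+1)) (fun m hm => by
    split_ifs with h'
    · exact mass_zero_of_gt hμ hn hj r m (by simpa using hm)
    · exact measure_empty)]
  rw [ENNReal.toReal_sum (fun m _ => by
    split_ifs
    · exact mass_ne_top hμ j _
    · simp)]
  refine Finset.sum_congr rfl fun m hm => ?_
  by_cases h : m ∈ A
  · rw [if_pos h, Set.indicator_of_mem h]; rfl
  · rw [if_neg h, Set.indicator_of_notMem h]; simp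

end Law
section Moments

open Finset

lemma blP_sum {n m : ℕ} (hn : 0 < n) (hm : m ≤ n) (g : ℕ → ℝ) :
    ∑ l ∈ range (n + 1), blP n m l * g l
      = (1 - (m:ℝ)/n)^2 * g (m+1) + ((m:ℝ)/n)^2 * g (m-1)
        + (1 - (1 - (m:ℝ)/n)^2 - ((m:ℝ)/n)^2) * g m := by
  have hpt : ∀ l, blP n m l * g l
      = (if l = m + 1 then (1 - (m:ℝ)/n)^2 * g l else 0)
        + (if l + 1 = m then ((m:ℝ)/n)^2 * g l else 0)
        + (if l = m then (1 - (1 - (m:ℝ)/n)^2 - ((m:ℝ)/n)^2) * g l else 0) := by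
    intro l
    unfold blP
    split_ifs <;> first | ring1 | (exfalso; omega)
  rw [Finset.sum_congr rfl (fun l _ => hpt l), Finset.sum_add_distrib, Finset.sum_add_distrib]
  congr 1
  · congr 1
    · rw [Finset.sum_ite_eq' (range (n+1)) (m+1) (fun l => (1 - (m:ℝ)/n)^2 * g l)]
      rcases lt_or_eq_of_le hm with h | h
      · rw [if_pos (by simp [mem_range]; omega)]
      · subst h
        rw [if_neg (by simp [mem_range])]
        rw [div_self (by exact_mod_cast hn.ne'), sub_self]
        ring
    · rcases Nat.eq_zero_or_pos m with h | h
      · subst h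
        rw [Finset.sum_eq_zero (fun l _ => by rw [if_neg (by omega)])]
        simp
      · obtain ⟨m', rfl⟩ : ∃ m', m = m' + 1 := ⟨m - 1, by omega⟩
        rw [Finset.sum_eq_single m'
          (fun b _ hb => by rw [if_neg (by omega)])
          (fun hb => absurd (by simp [mem_range]; omega : m' ∈ range (n+1)) hb)]
        rw [if_pos rfl]
        simp
  · rw [Finset.sum_ite_eq' (range (n+1)) m (fun l => (1 - (1 - (m:ℝ)/n)^2 - ((m:ℝ)/n)^2) * g l)]
    rw [if_pos (by simp [mem_range]; omega)]

lemma blP_F {n m : ℕ} (hn : 0 < n) (hm : m ≤ n) :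
    ∑ l ∈ range (n + 1), blP n m l * (2*(l:ℝ) - n)
      = (1 - 2/(n:ℝ)) * (2*(m:ℝ) - n) := by
  rw [blP_sum hn hm]
  have hncast : (0:ℝ) < n := by exact_mod_cast hn
  rcases Nat.eq_zero_or_pos m with h | h
  · subst h
    push_cast
    field_simp
    ring
  · have hc : ((m - 1 : ℕ) : ℝ) = (m:ℝ) - 1 := by
      have : (1:ℕ) ≤ m := h
      push_cast [this]; ring
    rw [hc]
    push_cast
    field_simp
    ring

lemma blP_F2 {n m : ℕ} (hn : 0 < n) (hm : m ≤ n) :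
    ∑ l ∈ range (n + 1), blP n m l * (2*(l:ℝ) - n)^2
      = (1 - 4/(n:ℝ) + 2/(n:ℝ)^2) * (2*(m:ℝ) - n)^2 + 2 := by
  rw [blP_sum hn hm]
  have hncast : (0:ℝ) < n := by exact_mod_cast hn
  rcases Nat.eq_zero_or_pos m with h | h
  · subst h
    push_cast
    field_simp
    ring
  · have hc : ((m - 1 : ℕ) : ℝ) = (m:ℝ) - 1 := by
      have : (1:ℕ) ≤ m := h
      push_cast [this]; ring
    rw [hc]
    push_cast
    field_simp
    ring

variable {n : ℕ} {μ : ℕ → Measure (ℕ → ℕ)} {j : ℕ}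

lemma M1_closed (hμ : IsMarkovChain (blP n) μ) (hn : 0 < n) (hj : j ≤ n) (k : ℕ) :
    ∑ m ∈ range (n + 1), blW μ j k m * (2*(m:ℝ) - n)
      = (1 - 2/(n:ℝ))^k * (2*(j:ℝ) - n) := by
  induction k with
  | zero =>
    rw [Finset.sum_congr rfl (fun m _ => by rw [blW_zero hμ m])]
    simp only [ite_mul, one_mul, zero_mul]
    rw [Finset.sum_ite_eq' (range (n+1)) j (fun m => (2*(m:ℝ) - n))]
    rw [if_pos (by simp only [mem_range]; omega)]
    simp
  | succ k ih =>
    calc ∑ m ∈ range (n + 1), blW μ j (k+1) m * (2*(m:ℝ) - n)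
        = ∑ l ∈ range (n + 1), (∑ m ∈ range (n+1), blW μ j k m * blP n m l) * (2*(l:ℝ) - n) := by
          exact Finset.sum_congr rfl fun l _ => by rw [blW_rec hμ hn hj k l]
      _ = ∑ l ∈ range (n + 1), ∑ m ∈ range (n+1), blW μ j k m * (blP n m l * (2*(l:ℝ) - n)) := by
          exact Finset.sum_congr rfl fun l _ => by rw [Finset.sum_mul]; exact Finset.sum_congr rfl fun m _ => by ring
      _ = ∑ m ∈ range (n+1), ∑ l ∈ range (n + 1), blW μ j k m * (blP n m l * (2*(l:ℝ) - n)) :=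
          Finset.sum_comm
      _ = ∑ m ∈ range (n+1), blW μ j k m * ∑ l ∈ range (n + 1), blP n m l * (2*(l:ℝ) - n) := by
          exact Finset.sum_congr rfl fun m _ => by rw [Finset.mul_sum]
      _ = ∑ m ∈ range (n+1), blW μ j k m * ((1 - 2/(n:ℝ)) * (2*(m:ℝ) - n)) := by
          exact Finset.sum_congr rfl fun m hm => by
            rw [blP_F hn (by simpa [Nat.lt_succ_iff] using hm)]
      _ = (1 - 2/(n:ℝ)) * ∑ m ∈ range (n+1), blW μ j k m * (2*(m:ℝ) - n) := by
          rw [Finset.mul_sum]; exact Finset.sum_congr rfl fun m _ => by ring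
      _ = (1 - 2/(n:ℝ))^(k+1) * (2*(j:ℝ) - n) := by rw [ih]; ring

lemma M2_closed (hμ : IsMarkovChain (blP n) μ) (hn : 0 < n) (hj : j ≤ n) (k : ℕ) :
    ∑ m ∈ range (n + 1), blW μ j k m * (2*(m:ℝ) - n)^2
      = (1 - 4/(n:ℝ) + 2/(n:ℝ)^2)^k * (2*(j:ℝ) - n)^2
        + 2 * ∑ i ∈ range k, (1 - 4/(n:ℝ) + 2/(n:ℝ)^2)^i := by
  induction k with
  | zero =>
    rw [Finset.sum_congr rfl (fun m _ => by rw [blW_zero hμ m])]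
    simp only [ite_mul, one_mul, zero_mul]
    rw [Finset.sum_ite_eq' (range (n+1)) j (fun m => (2*(m:ℝ) - n)^2)]
    rw [if_pos (by simp only [mem_range]; omega)]
    simp
  | succ k ih =>
    have step : ∑ m ∈ range (n + 1), blW μ j (k+1) m * (2*(m:ℝ) - n)^2
        = (1 - 4/(n:ℝ) + 2/(n:ℝ)^2) * (∑ m ∈ range (n + 1), blW μ j k m * (2*(m:ℝ) - n)^2) + 2 := by
      calc ∑ m ∈ range (n + 1), blW μ j (k+1) m * (2*(m:ℝ) - n)^2
          = ∑ l ∈ range (n + 1), (∑ m ∈ range (n+1), blW μ j k m * blP n m l) * (2*(l:ℝ) - n)^2 := by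
            exact Finset.sum_congr rfl fun l _ => by rw [blW_rec hμ hn hj k l]
        _ = ∑ l ∈ range (n + 1), ∑ m ∈ range (n+1), blW μ j k m * (blP n m l * (2*(l:ℝ) - n)^2) := by
            exact Finset.sum_congr rfl fun l _ => by rw [Finset.sum_mul]; exact Finset.sum_congr rfl fun m _ => by ring
        _ = ∑ m ∈ range (n+1), ∑ l ∈ range (n + 1), blW μ j k m * (blP n m l * (2*(l:ℝ) - n)^2) :=
            Finset.sum_comm
        _ = ∑ m ∈ range (n+1), blW μ j k m * ∑ l ∈ range (n + 1), blP n m l * (2*(l:ℝ) - n)^2 := by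
            exact Finset.sum_congr rfl fun m _ => by rw [Finset.mul_sum]
        _ = ∑ m ∈ range (n+1), blW μ j k m * ((1 - 4/(n:ℝ) + 2/(n:ℝ)^2) * (2*(m:ℝ) - n)^2 + 2) := by
            exact Finset.sum_congr rfl fun m hm => by
              rw [blP_F2 hn (by simpa [Nat.lt_succ_iff] using hm)]
        _ = (1 - 4/(n:ℝ) + 2/(n:ℝ)^2) * (∑ m ∈ range (n + 1), blW μ j k m * (2*(m:ℝ) - n)^2)
              + 2 * ∑ m ∈ range (n+1), blW μ j k m := by
            rw [Finset.mul_sum, Finset.mul_sum, ← Finset.sum_add_distrib]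
            exact Finset.sum_congr rfl fun m _ => by ring
        _ = _ := by rw [blW_total hμ hn hj k]; ring
    rw [step, ih, geom_sum_succ]
    ring

end Moments
section Pi

open Finset ENNReal

noncomputable def blpi (n m : ℕ) : ℝ :=
  (n.choose m : ℝ) * (n.choose (n - m) : ℝ) / ((2 * n).choose n : ℝ)

lemma vander2 (N K : ℕ) :
    ∑ i ∈ range (K + 1), N.choose i * N.choose (K - i) = (2 * N).choose K := by
  rw [two_mul, Nat.add_choose_eq]
  rw [Finset.Nat.sum_antidiagonal_eq_sum_range_succ_mk]

lemma vander (n : ℕ) :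
    ∑ m ∈ range (n + 1), n.choose m * n.choose (n - m) = (2 * n).choose n :=
  vander2 n n

lemma choose2n_pos (n : ℕ) : 0 < (2 * n).choose n :=
  Nat.choose_pos (by omega)

lemma blpi_nonneg (n m : ℕ) : 0 ≤ blpi n m := by
  unfold blpi; positivity

lemma blpi_zero_of_gt {n m : ℕ} (h : n < m) : blpi n m = 0 := by
  unfold blpi
  rw [Nat.choose_eq_zero_of_lt h]
  simp

lemma blpi_total (n : ℕ) : ∑ m ∈ range (n + 1), blpi n m = 1 := by
  unfold blpi
  rw [← Finset.sum_div]
  rw [show ∑ m ∈ range (n+1), (n.choose m : ℝ) * (n.choose (n - m) : ℝ)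
      = (((2*n).choose n : ℕ) : ℝ) by
    rw [← vander n]; push_cast; rfl]
  rw [div_self (by exact_mod_cast (choose2n_pos n).ne')]

lemma blPi_apply (n : ℕ) (A : Set ℕ) :
    ((blPi n) A).toReal = ∑ m ∈ range (n + 1), A.indicator (blpi n) m := by
  classical
  unfold blPi
  rw [Measure.sum_apply _ (show MeasurableSet A from trivial)]
  have h1 : ∀ m : ℕ, (ENNReal.ofReal ((n.choose m : ℝ) * (n.choose (n - m) : ℝ) / ((2 * n).choose n : ℝ)) •
      Measure.dirac m) A = if m ∈ A then ENNReal.ofReal (blpi n m) else 0 := by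
    intro m
    rw [Measure.smul_apply, Measure.dirac_apply' m (show MeasurableSet A from trivial)]
    unfold blpi
    by_cases h : m ∈ A
    · rw [if_pos h, Set.indicator_of_mem h]
      simp [smul_eq_mul]
    · rw [if_neg h, Set.indicator_of_notMem h]
      simp
  rw [tsum_congr h1]
  rw [tsum_eq_sum (s := range (n+1)) (fun m hm => by
    split_ifs with h
    · rw [blpi_zero_of_gt (by simpa using hm)]; simp
    · rfl)]
  rw [ENNReal.toReal_sum (fun m _ => by split_ifs <;> simp)]
  refine Finset.sum_congr rfl fun m _ => ?_
  by_cases h : m ∈ A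
  · rw [if_pos h, Set.indicator_of_mem h, ENNReal.toReal_ofReal (blpi_nonneg n m)]
  · rw [if_neg h, Set.indicator_of_notMem h]; simp

lemma blpi_symm {n m : ℕ} (hm : m ≤ n) : blpi n (n - m) = blpi n m := by
  unfold blpi
  rw [Nat.sub_sub_self hm]
  ring

lemma pi_mean (n : ℕ) :
    ∑ m ∈ range (n + 1), blpi n m * (2*(m:ℝ) - n) = 0 := by
  have h := Finset.sum_range_reflect (fun m => blpi n m * (2*(m:ℝ) - n)) (n+1)
  have h2 : ∀ m ∈ range (n+1), blpi n (n + 1 - 1 - m) * (2*((n + 1 - 1 - m : ℕ):ℝ) - n)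
      = - (blpi n m * (2*(m:ℝ) - n)) := by
    intro m hm
    have hmn : m ≤ n := by simpa [Nat.lt_succ_iff] using hm
    have e1 : n + 1 - 1 - m = n - m := by omega
    have e2 : ((n - m : ℕ) : ℝ) = (n:ℝ) - m := by
      push_cast [hmn]; ring
    rw [e1, blpi_symm hmn, e2]
    ring
  rw [Finset.sum_congr rfl h2] at h
  rw [Finset.sum_neg_distrib] at h
  linarith [h]

lemma nat_id_1' (q : ℕ) :
    (q+2) * (q+1) * (2*q+4).choose (q+2) = (2*q+4) * (2*q+3) * (2*q+2).choose q := by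
  have i1 := Nat.add_one_mul_choose_eq (2 * q + 3) (q + 1)
  have i2 := Nat.add_one_mul_choose_eq (2 * q + 2) q
  ring_nf at i1 i2 ⊢
  nlinarith [i1, i2]

lemma nat_id_2' (q : ℕ) :
    ∑ m ∈ range (q + 3), m * (q + 2 - m) * ((q+2).choose m * (q+2).choose (q + 2 - m))
      = (q+2) * (q+2) * (2*q+2).choose q := by
  rw [Finset.sum_range_succ]
  rw [show q + 2 - (q + 2) = 0 from by omega, Nat.mul_zero, Nat.zero_mul, Nat.add_zero]
  rw [Finset.sum_range_succ'
    (fun m => m * (q + 2 - m) * ((q+2).choose m * (q+2).choose (q + 2 - m))) (q+1)]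
  rw [Nat.zero_mul, Nat.zero_mul, Nat.add_zero]
  have key : ∀ i ∈ range (q + 1), (i+1) * (q + 2 - (i+1)) * ((q+2).choose (i+1) * (q+2).choose (q + 2 - (i+1)))
      = (q+2) * (q+2) * ((q+1).choose i * (q+1).choose (q - i)) := by
    intro i hi
    have hin : i < q + 1 := by simpa using hi
    obtain ⟨t, ht⟩ : ∃ t, q + 2 - (i+1) = t + 1 := ⟨q - i, by omega⟩
    have h1 : (i + 1) * (q+2).choose (i+1) = (q+2) * (q+1).choose i := by
      have h := Nat.add_one_mul_choose_eq (q + 1) i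
      rw [show q+1+1 = q+2 by omega] at h
      exact (mul_comm _ _).trans h.symm
    have h2 : (t + 1) * (q+2).choose (t+1) = (q+2) * (q+1).choose t := by
      have h := Nat.add_one_mul_choose_eq (q + 1) t
      rw [show q+1+1 = q+2 by omega] at h
      exact (mul_comm _ _).trans h.symm
    have e8 : t = q - i := by omega
    calc (i+1) * (q + 2 - (i+1)) * ((q+2).choose (i+1) * (q+2).choose (q + 2 - (i+1)))
        = ((i+1) * (q+2).choose (i+1)) * ((t+1) * (q+2).choose (t+1)) := by rw [ht]; ring
      _ = ((q+2) * (q+1).choose i) * ((q+2) * (q+1).choose t) := by rw [h1, h2]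
      _ = (q+2) * (q+2) * ((q+1).choose i * (q+1).choose (q - i)) := by rw [e8]; ring
  calc ∑ i ∈ range (q + 1), (i+1) * (q + 2 - (i+1)) * ((q+2).choose (i+1) * (q+2).choose (q + 2 - (i+1)))
      = ∑ i ∈ range (q + 1), (q+2) * (q+2) * ((q+1).choose i * (q+1).choose (q - i)) :=
        Finset.sum_congr rfl key
    _ = (q+2) * (q+2) * ∑ i ∈ range (q + 1), ((q+1).choose i * (q+1).choose (q - i)) := by
        rw [Finset.mul_sum]
    _ = (q+2) * (q+2) * (2 * (q+1)).choose q := by rw [vander2]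
    _ = (q+2) * (q+2) * (2*q+2).choose q := by rw [show 2 * (q+1) = 2*q+2 from by ring]

lemma pi_F2_aux (q : ℕ) :
    ∑ m ∈ range ((q + 2) + 1), blpi (q+2) m * (2*(m:ℝ) - ((q+2:ℕ):ℝ))^2 ≤ ((q+2:ℕ):ℝ) := by
  have hcc : (((q+2:ℕ)):ℝ) = (q:ℝ)+2 := by push_cast; ring
  rw [hcc]
  have hD : (0:ℝ) < ((2*(q+2)).choose (q+2) : ℝ) := by exact_mod_cast choose2n_pos (q+2)
  set D : ℝ := ((2*(q+2)).choose (q+2) : ℝ) with hDdef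
  set E : ℝ := (((2*q+2).choose q : ℕ) : ℝ) with hEdef
  set S : ℝ := ∑ m ∈ range (q + 2 + 1), blpi (q+2) m * (2*(m:ℝ) - ((q:ℝ)+2))^2 with hSdef
  have hSD : S * D = ((q:ℝ)+2)^2 * D - 4 * (((q:ℝ)+2) * ((q:ℝ)+2) * E) := by
    rw [hSdef, Finset.sum_mul]
    have hterm : ∀ m ∈ range (q + 2 + 1), blpi (q+2) m * (2*(m:ℝ) - ((q:ℝ)+2))^2 * D
        = ((q:ℝ)+2)^2 * (((q+2).choose m : ℝ) * ((q+2).choose (q + 2 - m) : ℝ))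
          - 4 * (((m * (q + 2 - m) * ((q+2).choose m * (q+2).choose (q + 2 - m)) : ℕ) : ℝ)) := by
      intro m hm
      have hmn : m ≤ q + 2 := by simpa [Nat.lt_succ_iff] using hm
      have e2 : ((q + 2 - m : ℕ) : ℝ) = ((q:ℝ)+2) - m := by push_cast [hmn]; ring
      unfold blpi
      push_cast [e2]
      rw [div_mul_eq_mul_div, div_mul_eq_mul_div, div_eq_iff hD.ne']
      push_cast
      ring
    rw [Finset.sum_congr rfl hterm, Finset.sum_sub_distrib, ← Finset.mul_sum, ← Finset.mul_sum]
    congr 1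
    · congr 1
      have := vander (q+2)
      have hcast : ∑ m ∈ range (q+2+1), (((q+2).choose m : ℝ) * ((q+2).choose (q+2-m) : ℝ))
          = (((2*(q+2)).choose (q+2) : ℕ) : ℝ) := by
        rw [← this]
        push_cast
        rfl
      rw [hcast, hDdef]
    · congr 1
      have := nat_id_2' q
      have hcast : ∑ m ∈ range (q+2+1), ((m * (q + 2 - m) * ((q+2).choose m * (q+2).choose (q + 2 - m)) : ℕ) : ℝ)
          = (((q+2) * (q+2) * (2*q+2).choose q : ℕ) : ℝ) := by
        rw [← this]
        push_cast
        rfl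
      rw [hcast, hEdef]
      push_cast
      ring
  have hB : ((q:ℝ)+2) * ((q:ℝ)+1) * D = (2*(q:ℝ)+4) * (2*(q:ℝ)+3) * E := by
    have h := nat_id_1' q
    have hc : (((q+2) * (q+1) * (2*q+4).choose (q+2) : ℕ) : ℝ)
        = (((2*q+4) * (2*q+3) * (2*q+2).choose q : ℕ) : ℝ) := by exact_mod_cast h
    push_cast at hc
    rw [hDdef, hEdef]
    rw [show 2*(q+2) = 2*q+4 from by ring]
    push_cast
    linarith [hc]
  have hkey : S * (D * (2*((q:ℝ)+2) - 1)) = ((q:ℝ)+2)^2 * D := by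
    linear_combination (2*((q:ℝ)+2)-1) * hSD + 2*((q:ℝ)+2) * hB
  have hq0 : (0:ℝ) ≤ (q:ℝ) := Nat.cast_nonneg q
  have hpos : (0:ℝ) < D * (2*((q:ℝ)+2) - 1) := by
    apply mul_pos hD
    linarith
  have h3 : S * (D * (2*((q:ℝ)+2)-1)) ≤ ((q:ℝ)+2) * (D * (2*((q:ℝ)+2)-1)) := by
    rw [hkey]
    nlinarith [hD, sq_nonneg ((q:ℝ)+2)]
  exact le_of_mul_le_mul_right h3 hpos

lemma pi_F2 {n : ℕ} (hn : 2 ≤ n) :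
    ∑ m ∈ range (n + 1), blpi n m * (2*(m:ℝ) - (n:ℝ))^2 ≤ (n:ℝ) := by
  obtain ⟨q, rfl⟩ : ∃ q, n = q + 2 := ⟨n - 2, by omega⟩
  exact pi_F2_aux q

end Pi
section Final

open Finset Real

lemma cheb (s : Finset ℕ) (w f : ℕ → ℝ) (hw : ∀ m ∈ s, 0 ≤ w m) {c : ℝ} (hc : 0 < c)
    (A : Set ℕ) (hA : ∀ m ∈ s, m ∈ A → c ≤ |f m|) :
    ∑ m ∈ s, A.indicator w m ≤ (∑ m ∈ s, w m * f m ^ 2) / c ^ 2 := by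
  rw [le_div_iff₀ (by positivity)]
  rw [Finset.sum_mul]
  refine Finset.sum_le_sum fun m hm => ?_
  by_cases h : m ∈ A
  · rw [Set.indicator_of_mem h]
    have h1 : c ^ 2 ≤ f m ^ 2 := by
      rw [← sq_abs (f m)]
      exact pow_le_pow_left₀ hc.le (hA m hm h) 2
    exact mul_le_mul_of_nonneg_left h1 (hw m hm)
  · rw [Set.indicator_of_notMem h]
    simp only [zero_mul]
    have := hw m hm
    positivity

lemma exp_three_le : Real.exp 3 ≤ 96 := by
  have h := Real.exp_one_lt_d9
  have h3 : Real.exp 3 = Real.exp 1 ^ 3 := by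
    rw [← Real.exp_nat_mul]; norm_num
  rw [h3]
  calc Real.exp 1 ^ 3 ≤ 2.7182818286 ^ 3 :=
        pow_le_pow_left₀ (Real.exp_pos 1).le h.le 3
    _ ≤ 96 := by norm_num

set_option maxHeartbeats 1000000 in
/-- Lower bound (total variation far from equilibrium before the cut-off time) for the
Bernoulli–Laplace chain: with `r_n(δ) = ⌊(n/4) log n + δ n⌋`,
`d_TV(L_j(X(r_n(δ))), π⁽ⁿ⁾) ≥ 1 - 192 ε⁻² e^{-4|δ|}`. -/
theorem stmt10 (n : ℕ) (hn : 4 ≤ n) (μ : ℕ → Measure (ℕ → ℕ))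
    (hμ : IsMarkovChain (blP n) μ)
    (ε : ℝ) (hε : 0 < ε) (j : ℕ) (hj : j ≤ n) (hjfar : ε * n ≤ |(j : ℝ) - n / 2|)
    (δ : ℝ) (hδ1 : -(1 / 4) * Real.log n ≤ δ) (hδ2 : δ ≤ 0) :
    1 - 192 / ε ^ 2 * Real.exp (-4 * |δ|)
      ≤ tvDist (Measure.map (fun ω : ℕ → ℕ => ω ⌊(n : ℝ) / 4 * Real.log n + δ * n⌋₊) (μ j))
          (blPi n) := by
  have hn0 : 0 < n := by omega
  have hN : (4:ℝ) ≤ (n:ℝ) := by exact_mod_cast hn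
  have hN0 : (0:ℝ) < (n:ℝ) := by linarith
  set r : ℕ := ⌊(n : ℝ) / 4 * Real.log n + δ * n⌋₊ with hr
  set β : ℝ := 1 - 2/(n:ℝ) with hβ
  set γ : ℝ := 1 - 4/(n:ℝ) + 2/(n:ℝ)^2 with hγ
  have hβpos : 0 < β := by
    rw [hβ]
    have : 2/(n:ℝ) ≤ 1/2 := by
      rw [div_le_div_iff₀ hN0 (by norm_num)]; linarith
    linarith
  have hβle : β ≤ 1 := by
    rw [hβ]
    have : 0 < 2/(n:ℝ) := by positivity
    linarith
  have hγ0 : 0 ≤ γ := by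
    rw [hγ]
    have h1 : 4/(n:ℝ) ≤ 1 := by rw [div_le_one hN0]; linarith
    have h2 : 0 < 2/(n:ℝ)^2 := by positivity
    linarith
  have hγβ : γ ≤ β^2 := by
    rw [hγ, hβ]
    have h2 : 0 < 2/(n:ℝ)^2 := by positivity
    have : (1 - 2/(n:ℝ))^2 = 1 - 4/(n:ℝ) + 4/(n:ℝ)^2 := by
      field_simp
      ring
    rw [this]
    have h3 : 2/(n:ℝ)^2 ≤ 4/(n:ℝ)^2 := by gcongr <;> norm_num
    linarith [h3]
  have hγ1 : γ < 1 := by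
    rw [hγ]
    have h1 : 2/(n:ℝ)^2 < 4/(n:ℝ) := by
      rw [div_lt_div_iff₀ (by positivity) hN0]
      nlinarith
    linarith
  -- mean and threshold
  set Fj : ℝ := 2*(j:ℝ) - n with hFjdef
  have hFj : 2*ε*(n:ℝ) ≤ |Fj| := by
    have h : Fj = 2 * ((j:ℝ) - n/2) := by rw [hFjdef]; ring
    rw [h, abs_mul, abs_two]
    linarith [hjfar]
  set M : ℝ := β^r * Fj with hM
  set c : ℝ := ε * n * β^r with hc
  have hcpos : 0 < c := by rw [hc]; positivity
  have hMc : 2*c ≤ |M| := by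
    rw [hM, abs_mul, abs_pow, abs_of_pos hβpos, hc]
    calc 2 * (ε * n * β^r) = β^r * (2*ε*n) := by ring
      _ ≤ β^r * |Fj| := mul_le_mul_of_nonneg_left hFj (by positivity)
  set A : Set ℕ := {m : ℕ | |2*(m:ℝ) - n| < c} with hA
  -- variance bound for the chain
  have hvar : ∑ m ∈ range (n+1), blW μ j r m * (2*(m:ℝ) - n - M)^2 ≤ (n:ℝ) := by
    have hexp : ∑ m ∈ range (n+1), blW μ j r m * (2*(m:ℝ) - n - M)^2
        = (∑ m ∈ range (n+1), blW μ j r m * (2*(m:ℝ) - n)^2)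
          - 2*M*(∑ m ∈ range (n+1), blW μ j r m * (2*(m:ℝ) - n))
          + M^2 * (∑ m ∈ range (n+1), blW μ j r m) := by
      rw [Finset.mul_sum, Finset.mul_sum, ← Finset.sum_sub_distrib, ← Finset.sum_add_distrib]
      exact Finset.sum_congr rfl fun m _ => by ring
    rw [hexp, M1_closed hμ hn0 hj r, M2_closed hμ hn0 hj r, blW_total hμ hn0 hj r, ← hβ, ← hγ,
      ← hFjdef]
    have e1 : γ^r ≤ (β^r)^2 := by
      calc γ^r ≤ (β^2)^r := pow_le_pow_left₀ hγ0 hγβ r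
        _ = (β^r)^2 := by rw [← pow_mul, ← pow_mul, mul_comm]
    have e2 : ∑ i ∈ range r, γ^i ≤ (n:ℝ)/2 := by
      rw [geom_sum_eq hγ1.ne r]
      rw [div_le_iff_of_neg (by linarith : γ - 1 < 0)]
      have hh : (n:ℝ)/2 * (γ - 1) = -2 + 1/n := by
        rw [hγ]; field_simp; ring
      have h1n : 1/(n:ℝ) ≤ 1 := by
        rw [div_le_one hN0]; linarith
      have hγr : 0 ≤ γ^r := pow_nonneg hγ0 r
      linarith
    have hFj2 : 0 ≤ Fj^2 := sq_nonneg _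
    have key : γ^r * Fj^2 ≤ (β^r)^2 * Fj^2 := mul_le_mul_of_nonneg_right e1 hFj2
    rw [hM]
    nlinarith [key, e2]
  -- Chebyshev for the chain law
  set ν : Measure ℕ := Measure.map (fun ω : ℕ → ℕ => ω r) (μ j) with hν
  have hνA : (ν A).toReal ≤ (n:ℝ)/c^2 := by
    rw [hν, blW_map hμ hn0 hj r A]
    have hch := cheb (range (n+1)) (blW μ j r) (fun m => 2*(m:ℝ) - n - M)
      (fun m _ => blW_nonneg r m) hcpos A (fun m _ hmA => by
        have h1 : |2*(m:ℝ) - n| < c := hmA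
        have h2 : |M| - |2*(m:ℝ) - n| ≤ |M - (2*(m:ℝ) - n)| := abs_sub_abs_le_abs_sub _ _
        have h3 : |M - (2*(m:ℝ) - n)| = |2*(m:ℝ) - n - M| := abs_sub_comm _ _
        rw [h3] at h2
        linarith [hMc])
    calc ∑ m ∈ range (n+1), A.indicator (blW μ j r) m
        ≤ (∑ m ∈ range (n+1), blW μ j r m * (2*(m:ℝ) - n - M)^2) / c^2 := hch
      _ ≤ (n:ℝ)/c^2 := (div_le_div_iff_of_pos_right (by positivity)).2 hvar
  -- Chebyshev for the stationary law
  have hπA : 1 - (n:ℝ)/c^2 ≤ ((blPi n) A).toReal := by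
    rw [blPi_apply n A]
    have hch := cheb (range (n+1)) (blpi n) (fun m => 2*(m:ℝ) - n)
      (fun m _ => blpi_nonneg n m) hcpos Aᶜ (fun m _ hmA => by
        have : ¬ (|2*(m:ℝ) - n| < c) := hmA
        linarith [not_lt.1 this])
    have hsplit : ∀ m, A.indicator (blpi n) m + Aᶜ.indicator (blpi n) m = blpi n m := by
      intro m
      by_cases h : m ∈ A
      · rw [Set.indicator_of_mem h, Set.indicator_of_notMem (by simpa using h)]
        ring
      · rw [Set.indicator_of_notMem h, Set.indicator_of_mem (by simpa using h)]
        ring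
    have htot : ∑ m ∈ range (n+1), A.indicator (blpi n) m
        + ∑ m ∈ range (n+1), Aᶜ.indicator (blpi n) m = 1 := by
      rw [← Finset.sum_add_distrib, Finset.sum_congr rfl (fun m _ => hsplit m), blpi_total n]
    have hcomp : ∑ m ∈ range (n+1), Aᶜ.indicator (blpi n) m ≤ (n:ℝ)/c^2 := by
      calc ∑ m ∈ range (n+1), Aᶜ.indicator (blpi n) m
          ≤ (∑ m ∈ range (n+1), blpi n m * (2*(m:ℝ) - n)^2) / c^2 := hch
        _ ≤ (n:ℝ)/c^2 := (div_le_div_iff_of_pos_right (by positivity)).2 (pi_F2 (by omega))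
    linarith
  -- bounding the sup from below
  have hbound : ∀ B : Set ℕ, |(ν B).toReal - ((blPi n) B).toReal| ≤ 1 := by
    intro B
    have h1 : 0 ≤ (ν B).toReal := ENNReal.toReal_nonneg
    have h2 : 0 ≤ ((blPi n) B).toReal := ENNReal.toReal_nonneg
    have h3 : (ν B).toReal ≤ 1 := by
      rw [hν, blW_map hμ hn0 hj r B]
      calc ∑ m ∈ range (n+1), B.indicator (blW μ j r) m
          ≤ ∑ m ∈ range (n+1), blW μ j r m :=
            Finset.sum_le_sum fun m hm => Set.indicator_le_self' (fun m _ => blW_nonneg r m) m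
        _ = 1 := blW_total hμ hn0 hj r
    have h4 : ((blPi n) B).toReal ≤ 1 := by
      rw [blPi_apply n B]
      calc ∑ m ∈ range (n+1), B.indicator (blpi n) m
          ≤ ∑ m ∈ range (n+1), blpi n m :=
            Finset.sum_le_sum fun m hm => Set.indicator_le_self' (fun m _ => blpi_nonneg n m) m
        _ = 1 := blpi_total n
    rw [abs_le]
    constructor <;> linarith
  have hbdd : BddAbove (Set.range fun B : Set ℕ => |(ν B).toReal - ((blPi n) B).toReal|) := by
    refine ⟨1, ?_⟩
    rintro x ⟨B, rfl⟩
    exact hbound B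
  have hsup : |(ν A).toReal - ((blPi n) A).toReal| ≤ tvDist ν (blPi n) :=
    le_ciSup hbdd A
  have htv : 1 - 2*((n:ℝ)/c^2) ≤ tvDist ν (blPi n) := by
    have h5 : ((blPi n) A).toReal - (ν A).toReal ≤ |(ν A).toReal - ((blPi n) A).toReal| := by
      rw [abs_sub_comm]
      exact le_abs_self _
    linarith
  -- numeric estimate
  have hlogn0 : 0 ≤ Real.log n := Real.log_nonneg (by linarith)
  have hR0 : 0 ≤ (n:ℝ)/4 * Real.log n + δ * n := by
    have h := mul_le_mul_of_nonneg_right hδ1 hN0.le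
    linarith [h]
  have hrR : (r:ℝ) ≤ (n:ℝ)/4 * Real.log n + δ * n := Nat.floor_le hR0
  have hlogβ : -(2/((n:ℝ)-2)) ≤ Real.log β := by
    have hβinv : Real.log β = - Real.log β⁻¹ := by rw [Real.log_inv]; ring
    have h1 : Real.log β⁻¹ ≤ β⁻¹ - 1 := Real.log_le_sub_one_of_pos (by positivity)
    have h2 : β⁻¹ - 1 ≤ 2/((n:ℝ)-2) := by
      rw [hβ]
      have hβeq : (1 - 2/(n:ℝ))⁻¹ = (n:ℝ)/((n:ℝ)-2) := by
        rw [show (1 - 2/(n:ℝ)) = ((n:ℝ)-2)/(n:ℝ) by field_simp]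
        rw [inv_div]
      rw [hβeq]
      rw [div_sub' (by linarith : (n:ℝ)-2 ≠ 0)]
      rw [div_le_div_iff₀ (by linarith) (by linarith)]
      ring_nf
      exact le_refl _
    linarith
  have hlogβ0 : Real.log β ≤ 0 := Real.log_nonpos hβpos.le hβle
  have habs : 4*|δ| ≤ Real.log n := by
    rw [abs_of_nonpos hδ2]
    linarith
  have hlogle : Real.log n ≤ (n:ℝ) - 1 := Real.log_le_sub_one_of_pos hN0
  have hkey : -Real.log n + 4*|δ| - 3 ≤ (2*(r:ℝ)) * Real.log β := by
    have s1 : (2*(r:ℝ)) * Real.log β ≥ (2*((n:ℝ)/4 * Real.log n + δ * n)) * Real.log β := by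
      apply mul_le_mul_of_nonpos_right _ hlogβ0
      linarith
    have s2 : (2*((n:ℝ)/4 * Real.log n + δ * n)) * Real.log β
        ≥ (2*((n:ℝ)/4 * Real.log n + δ * n)) * (-(2/((n:ℝ)-2))) := by
      apply mul_le_mul_of_nonneg_left hlogβ
      linarith
    have hn2 : (0:ℝ) < (n:ℝ) - 2 := by linarith
    have s3 : -Real.log n + 4*|δ| - 3 ≤ (2*((n:ℝ)/4 * Real.log n + δ * n)) * (-(2/((n:ℝ)-2))) := by
      rw [abs_of_nonpos hδ2]
      rw [show (2*((n:ℝ)/4 * Real.log n + δ * n)) * (-(2/((n:ℝ)-2)))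
          = (-((n:ℝ) * (Real.log n + 4*δ)))/((n:ℝ)-2) by field_simp; ring]
      rw [le_div_iff₀ hn2]
      nlinarith [hδ1, hδ2, hlogle, hlogn0, hN]
    linarith
  have hβ2r : Real.exp (-Real.log n + 4*|δ| - 3) ≤ (β^r)^2 := by
    have hpoweq : (β^r)^2 = Real.exp ((2*(r:ℝ)) * Real.log β) := by
      rw [← pow_mul]
      rw [show (2*(r:ℝ)) = ((r*2 : ℕ) : ℝ) by push_cast; ring]
      rw [Real.exp_nat_mul, Real.exp_log hβpos]
    rw [hpoweq]
    exact Real.exp_le_exp.2 hkey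
  have hexplog : Real.exp (-Real.log n + 4*|δ| - 3)
      = Real.exp (-(3:ℝ)) * Real.exp (4*|δ|) / n := by
    rw [show -Real.log n + 4*|δ| - 3 = (-(3:ℝ)) + 4*|δ| + (-Real.log n) by ring]
    rw [Real.exp_add, Real.exp_add, Real.exp_neg (Real.log n), Real.exp_log hN0]
    ring
  have hc2 : Real.exp (-(3:ℝ)) * Real.exp (4*|δ|) * (ε^2 * n) ≤ c^2 := by
    have hcsq : c^2 = ε^2 * (n:ℝ)^2 * (β^r)^2 := by
      rw [hc]
      ring
    rw [hcsq]
    calc Real.exp (-(3:ℝ)) * Real.exp (4*|δ|) * (ε^2 * n)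
        = ε^2 * (n:ℝ)^2 * (Real.exp (-(3:ℝ)) * Real.exp (4*|δ|) / n) := by
          field_simp
      _ ≤ ε^2 * (n:ℝ)^2 * (β^r)^2 := by
          rw [← hexplog]
          exact mul_le_mul_of_nonneg_left hβ2r (by positivity)
  have hnum : 2*((n:ℝ)/c^2) ≤ 192 / ε ^ 2 * Real.exp (-4 * |δ|) := by
    have hK : (0:ℝ) < Real.exp (-(3:ℝ)) * Real.exp (4*|δ|) * (ε^2 * n) := by positivity
    have h6 : (n:ℝ)/c^2 ≤ (n:ℝ)/(Real.exp (-(3:ℝ)) * Real.exp (4*|δ|) * (ε^2 * n)) := by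
      apply div_le_div_of_nonneg_left (by linarith) hK hc2
    have h7 : (n:ℝ)/(Real.exp (-(3:ℝ)) * Real.exp (4*|δ|) * (ε^2 * n))
        = Real.exp 3 * Real.exp (-4 * |δ|) / ε^2 := by
      rw [show Real.exp (-4 * |δ|) = (Real.exp (4*|δ|))⁻¹ by rw [← Real.exp_neg, neg_mul]]
      rw [Real.exp_neg (3:ℝ)]
      field_simp
    have h8 : 2 * (Real.exp 3 * Real.exp (-4 * |δ|) / ε^2) ≤ 192 / ε ^ 2 * Real.exp (-4 * |δ|) := by
      have hE : (0:ℝ) ≤ Real.exp (-4 * |δ|) := (Real.exp_pos _).le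
      have h23 : 2 * Real.exp 3 ≤ 192 := by linarith [exp_three_le]
      calc 2 * (Real.exp 3 * Real.exp (-4 * |δ|) / ε^2)
          = (2 * Real.exp 3) * Real.exp (-4 * |δ|) / ε^2 := by ring
        _ ≤ 192 * Real.exp (-4 * |δ|) / ε^2 := by gcongr
        _ = 192 / ε ^ 2 * Real.exp (-4 * |δ|) := by ring
    calc 2*((n:ℝ)/c^2) ≤ 2*((n:ℝ)/(Real.exp (-(3:ℝ)) * Real.exp (4*|δ|) * (ε^2 * n))) := by linarith
      _ = 2 * (Real.exp 3 * Real.exp (-4 * |δ|) / ε^2) := by rw [h7]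
      _ ≤ 192 / ε ^ 2 * Real.exp (-4 * |δ|) := h8
  linarith [htv, hnum]

end Final
end
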